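/- arXiv:0704.0836 — 3 statements merged into one kernel-verified Lean document; each statement's English description precedes it below -/
import Mathlib

section
/- If T is an antichain-inducing unordered partition of a labeled poset P, then F(P) = Σ_{K ∈ 𝕂_{P,T}} F(P_K); equivalently, 𝓛(P) is the disjoint union, over K ∈ 𝕂_{P,T}, of the sets of permutations whose coarsest T-segmentation induces the ordered partition K. -/
noncomputable section
open scoped Classical

/-! ## Quasisymmetric functions -/

/-- The list of exponents of a monomial, read in increasing order of the variables. -/
def expList (d : ℕ →₀ ℕ) : List ℕ := (d.support.sort (· ≤ ·)).map d

/-- The set of partial sums of a list of naturals (including `0` and the total sum). -/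
def psums (l : List ℕ) : Set ℕ := {k | ∃ i, (l.take i).sum = k}

/-- `Refines β α` : the composition `β` refines the composition `α`. -/
def Refines (β α : List ℕ) : Prop := β.sum = α.sum ∧ psums α ⊆ psums β

/-- The monomial quasisymmetric function `x^α`, as a formal power series in
countably many variables with rational coefficients. -/
def Mqs (α : List ℕ) : MvPowerSeries ℕ ℚ := fun d => if expList d = α then 1 else 0

/-- The fundamental quasisymmetric function `L_α = Σ_{β ⪯ α} x^β`. -/
def Lqs (α : List ℕ) : MvPowerSeries ℕ ℚ := fun d => if Refines (expList d) α then 1 else 0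

/-- `C(π)`: the lengths of the maximal increasing runs of a sequence. -/
def Cruns : List ℕ → List ℕ
  | [] => []
  | [_] => [1]
  | a :: b :: l =>
    match Cruns (b :: l) with
    | [] => [1]
    | k :: ks => if a < b then (k + 1) :: ks else 1 :: k :: ks

/-- A labeled poset: a binary relation on a finite set of (label) integers. -/
structure LabeledPoset where
  labels : Finset ℕ
  lt : ℕ → ℕ → Prop

/-- The conditions making a `LabeledPoset` an honest partial order on a finite
set of positive integers. -/
def LabeledPoset.IsValid (P : LabeledPoset) : Prop :=
  (∀ x ∈ P.labels, 0 < x) ∧ (∀ x y, P.lt x y → x ∈ P.labels ∧ y ∈ P.labels) ∧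
    (∀ x, ¬ P.lt x x) ∧ (∀ x y z, P.lt x y → P.lt y z → P.lt x z)

/-- `π` is a linear extension of the labeled poset `P`, listed as the sequence of labels. -/
def IsLinext (P : LabeledPoset) (π : List ℕ) : Prop :=
  π.Nodup ∧ π.toFinset = P.labels ∧ ∀ x y, P.lt x y → π.idxOf x < π.idxOf y

/-- The (finite) set `𝓛(P)` of linear extensions of `P`. -/
def linextFinset (P : LabeledPoset) : Finset (List ℕ) :=
  (P.labels.sort (· ≤ ·)).permutations.toFinset.filter (IsLinext P)

/-- The quasisymmetric function of a labeled poset: `F(P) = Σ_{π ∈ 𝓛(P)} L_{C(π)}`. -/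
def Fp (P : LabeledPoset) : MvPowerSeries ℕ ℚ := ∑ π ∈ linextFinset P, Lqs (Cruns π)

/-! ## The new basis -/

def oddSumBelow (α : List ℕ) (k : ℕ) : ℕ :=
  ∑ j ∈ (Finset.range k).filter (fun j => j % 2 = 1), α.getD j 0

def evenSumBelow (α : List ℕ) (k : ℕ) : ℕ :=
  ∑ j ∈ (Finset.range k).filter (fun j => j % 2 = 0), α.getD j 0

/-- Largest label used before the block of the (0-based) `k`-th antichain of `P_α`:
even-indexed antichains `A_2, A_4, …` (1-based) are labeled first, starting from `1`,
then the odd-indexed ones `A_1, A_3, …`. -/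
def blockStart (α : List ℕ) (k : ℕ) : ℕ :=
  if k % 2 = 1 then oddSumBelow α k else oddSumBelow α α.length + evenSumBelow α k

/-- The set of labels of the (0-based) `k`-th antichain of `P_α`. -/
def blockFS (α : List ℕ) (k : ℕ) : Finset ℕ :=
  Finset.Ioc (blockStart α k) (blockStart α k + α.getD k 0)

/-- The labeled poset `P_α = A_1 ⊕ ⋯ ⊕ A_m` of a composition `α`, with the alternating
labeling described above. -/
def Pcomp (α : List ℕ) : LabeledPoset where
  labels := Finset.Ioc 0 α.sum
  lt := fun x y => ∃ k k', k < k' ∧ k' < α.length ∧ x ∈ blockFS α k ∧ y ∈ blockFS α k'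

/-- The new basis element `N_α := F(P_α)` (in particular `N_∅ = 1`). -/
def Nqs (α : List ℕ) : MvPowerSeries ℕ ℚ := Fp (Pcomp α)

/-- The rank `r(α)` of a composition: the sum of its odd-indexed (1-based) parts. -/
def crank (l : List ℕ) : ℕ :=
  ∑ i ∈ (Finset.range l.length).filter (fun i => i % 2 = 0), l.getD i 0

/-! ## Ordered partitions -/

/-- The ordinal sum `K_1 ⊕ ⋯ ⊕ K_k` of the blocks of an ordered partition,
each block an antichain, each element labeled by itself. -/
def opPoset (K : List (Finset ℕ)) : LabeledPoset where
  labels := K.foldr (· ∪ ·) ∅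
  lt := fun x y => ∃ i j, i < j ∧ j < K.length ∧ x ∈ K.getD i ∅ ∧ y ∈ K.getD j ∅

/-- `x` and `y` lie in a common block of `T`. -/
def sameBlock (T : Finset (Finset ℕ)) (x y : ℕ) : Prop := ∃ b ∈ T, x ∈ b ∧ y ∈ b

/-- `K_T(π)`: the ordered partition induced on `π` by the unordered partition `T`,
via the coarsest segmentation of `π` whose segments lie in blocks of `T`. -/
def KT (T : Finset (Finset ℕ)) (π : List ℕ) : List (Finset ℕ) :=
  (π.splitBy fun x y => decide (sameBlock T x y)).map List.toFinset

/-! ## Matroids -/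

/-- The strict labeling of the ground set used for base posets: the elements of the
cobase `E \ B` receive the labels `1, …, |E \ B|` (in increasing order), and the
elements of `B` receive the labels `|E \ B| + 1, …, |E|` (in increasing order). -/
def labelOfIn (E B : Finset ℕ) (e : ℕ) : ℕ :=
  if e ∈ B then (E \ B).card + (B.sort (· ≤ ·)).idxOf e + 1
  else ((E \ B).sort (· ≤ ·)).idxOf e + 1

/-- The (strictly labeled) base poset `P_B` of a base `B` of the matroid on ground set `E`
whose bases are given by the predicate `Bases`: `e <_{P_B} e'` iff `e ∈ B`, `e' ∈ E \ B`
and `(B \ {e}) ∪ {e'}` is again a base. -/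
def basePoset (E : Finset ℕ) (Bases : Finset ℕ → Prop) (B : Finset ℕ) : LabeledPoset where
  labels := Finset.Ioc 0 E.card
  lt := fun x y => ∃ e ∈ B, ∃ e' ∈ E \ B,
    x = labelOfIn E B e ∧ y = labelOfIn E B e' ∧ Bases (insert e' (B.erase e))

/-- `F` of the base system on ground set `E` with bases `Bases`:
`F = Σ_{B base} F(P_B)`. -/
def FmOf (E : Finset ℕ) (Bases : Finset ℕ → Prop) : MvPowerSeries ℕ ℚ :=
  ∑ B ∈ E.powerset.filter Bases, Fp (basePoset E Bases B)

/-- The ground set of a matroid as a `Finset` (empty if the ground set is infinite). -/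
def groundFinset (M : Matroid ℕ) : Finset ℕ :=
  if h : M.E.Finite then h.toFinset else ∅

/-- The Billera–Jia–Reiner quasisymmetric function of a matroid. -/
def Fm (M : Matroid ℕ) : MvPowerSeries ℕ ℚ :=
  FmOf (groundFinset M) (fun B => M.IsBase ↑B)

/-- The number of bases of a matroid (with finite ground set). -/
def numBases (M : Matroid ℕ) : ℕ :=
  ((groundFinset M).powerset.filter (fun B => M.IsBase ↑B)).card

/-- `M` has rank `r`: every base has `r` elements. -/
def RankEq (M : Matroid ℕ) (r : ℕ) : Prop := ∀ B, M.IsBase B → B.ncard = r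

/-- A loop: an element of the ground set contained in no base. -/
def IsLoopE (M : Matroid ℕ) (e : ℕ) : Prop := e ∈ M.E ∧ ∀ B, M.IsBase B → e ∉ B

/-- A coloop: an element of the ground set contained in every base. -/
def IsColoopE (M : Matroid ℕ) (e : ℕ) : Prop := e ∈ M.E ∧ ∀ B, M.IsBase B → e ∈ B

/-- `M` is loopless: no element is a loop. -/
def LooplessE (M : Matroid ℕ) : Prop := ∀ e ∈ M.E, ¬ IsLoopE M e

/-- A circuit: a minimal dependent set. -/
def IsCircuitE (M : Matroid ℕ) (C : Set ℕ) : Prop :=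
  C ⊆ M.E ∧ ¬ M.Indep C ∧ ∀ D ⊂ C, M.Indep D

/-- Two ground set elements lie on a common circuit. -/
def circRel (M : Matroid ℕ) (x y : ℕ) : Prop := ∃ C, IsCircuitE M C ∧ x ∈ C ∧ y ∈ C

/-- `M` is connected: it has exactly one component, the components being the classes of the
equivalence relation generated by lying on a common circuit. -/
def ConnectedE (M : Matroid ℕ) : Prop :=
  M.E.Nonempty ∧ ∀ x ∈ M.E, ∀ y ∈ M.E, Relation.EqvGen (circRel M) x y

/-- Isomorphism of matroids: a bijection of the ground sets carrying bases to bases. -/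
def MatroidIso (M M' : Matroid ℕ) : Prop :=
  ∃ f : ℕ → ℕ, Set.BijOn f M.E M'.E ∧ ∀ B ⊆ M.E, (M.IsBase B ↔ M'.IsBase (f '' B))

/-! ## QSym, the ideal 𝔪 and 𝔪² -/

/-- The span of the monomial quasisymmetric functions indexed by nonempty compositions:
the homogeneous part `𝔪 = ⊕_{d ≥ 1} QSym_d` of `QSym` with zero constant term. -/
def QSymPos : Submodule ℚ (MvPowerSeries ℕ ℚ) :=
  Submodule.span ℚ {f | ∃ α : List ℕ, α ≠ [] ∧ (∀ a ∈ α, 0 < a) ∧ f = Mqs α}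

/-- `𝔪²`: the span of pairwise products of elements of `𝔪`. -/
def mSq : Submodule ℚ (MvPowerSeries ℕ ℚ) :=
  Submodule.span ℚ {h | ∃ f ∈ QSymPos, ∃ g ∈ QSymPos, h = f * g}

/-! ## Rank-two matroids -/

/-- The (0-based) `k`-th consecutive block of sizes given by `lam`, inside `{1, …, n}`. -/
def blockOfComp (lam : List ℕ) (k : ℕ) : Finset ℕ :=
  Finset.Ioc ((lam.take k).sum) ((lam.take (k + 1)).sum)

/-- The consecutive blocks of sizes `lam` partitioning `{1, …, n}`. -/
def blocksOf (lam : List ℕ) : List (Finset ℕ) :=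
  (List.range lam.length).map (blockOfComp lam)

/-- `M` is a realization of the loopless rank-two matroid with parallelism classes the
given blocks: the bases are exactly the two-element sets meeting two distinct blocks. -/
def IsBlockRealization (M : Matroid ℕ) (blocks : List (Finset ℕ)) : Prop :=
  List.Pairwise Disjoint blocks ∧ (∀ b ∈ blocks, b.Nonempty) ∧
    M.E = ↑(blocks.foldr (· ∪ ·) ∅) ∧
    ∀ B : Set ℕ, M.IsBase B ↔ ∃ x y : ℕ, x ≠ y ∧ B = {x, y} ∧
      ∃ i j, i < blocks.length ∧ j < blocks.length ∧ i ≠ j ∧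
        x ∈ blocks.getD i ∅ ∧ y ∈ blocks.getD j ∅

/-- The bases of the canonical realization of `M_lam` on `{1, …, n}`. -/
def rank2Bases (lam : List ℕ) (B : Finset ℕ) : Prop :=
  ∃ x y : ℕ, x ≠ y ∧ B = {x, y} ∧ ∃ i j, i < lam.length ∧ j < lam.length ∧ i ≠ j ∧
    x ∈ blockOfComp lam i ∧ y ∈ blockOfComp lam j

/-- `F(M_lam)` for the canonical realization of the loopless rank-two matroid `M_lam`. -/
def Frank2 (lam : List ℕ) : MvPowerSeries ℕ ℚ :=
  FmOf (Finset.Icc 1 lam.sum) (rank2Bases lam)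

/-- The composition `(2, n-2)` (interpreted as `(2)` when `n = 2`). -/
def comp2 (n : ℕ) : List ℕ := if n ≤ 2 then [2] else [2, n - 2]

/-- The composition `(1, j, 1, n-2-j)` (interpreted as `(1, n-2, 1)` when `j = n-2`). -/
def comp4 (n j : ℕ) : List ℕ := if j + 2 = n then [1, j, 1] else [1, j, 1, n - 2 - j]

/-- `T^n_k := (1/2)·N_{(2,n−2)} + Σ_{j ≥ 1} C(k−1,j)·N_{(1,j,1,n−2−j)}`. -/
def Tnk (n k : ℕ) : MvPowerSeries ℕ ℚ :=
  (2 : ℚ)⁻¹ • Nqs (comp2 n) +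
    ∑ j ∈ Finset.Icc 1 (n - 2), ((k - 1).choose j : ℚ) • Nqs (comp4 n j)

/-- `U^n_k := k(n−k)·T^n_k`. -/
def Unk (n k : ℕ) : MvPowerSeries ℕ ℚ := ((k * (n - k) : ℕ) : ℚ) • Tnk n k

/-- A representative of `Ū^n_k ∈ QSym/𝔪²`. -/
def UbarRep (n k : ℕ) : MvPowerSeries ℕ ℚ :=
  if 2 * k < n then Unk n k else if 2 * k = n then 0 else -(Unk n (n - k))

/-- The matroid base polytope `Q(M)`, inside `ℝ^ℕ`, the ground-set element `i`
being identified with the standard basis vector `e_i`. -/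
def Qpoly (M : Matroid ℕ) : Set (ℕ → ℝ) :=
  convexHull ℝ {x | ∃ B : Set ℕ, M.IsBase B ∧ x = B.indicator fun _ => (1 : ℝ)}

/-- A partition of `n`: a weakly decreasing composition of weight `n`. -/
def IsPartitionL (n : ℕ) (l : List ℕ) : Prop :=
  l.Pairwise (· ≥ ·) ∧ (∀ a ∈ l, 0 < a) ∧ l.sum = n

/-! ## Extra combinatorics for Statement 1 -/

/-- The binary word `b(π)`: first letter `true`; `i`-th letter records `π_{i−1} < π_i`. -/
def bword : List ℕ → List Bool
  | [] => []
  | a :: l => true :: List.zipWith (fun x y => decide (x < y)) (a :: l) l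

/-- Lengths of the maximal constant runs of a word. -/
def constRuns : List Bool → List ℕ
  | [] => []
  | [_] => [1]
  | a :: b :: l =>
    match constRuns (b :: l) with
    | [] => [1]
    | k :: ks => if a = b then (k + 1) :: ks else 1 :: k :: ks

/-- `ρ(π)`: the lengths of the maximal constant runs of `b(π)`. -/
def rhoComp (π : List ℕ) : List ℕ := constRuns (bword π)

/-- The distinguished linear extension of `P_α`: the antichains listed in order,
with labels increasing within odd-indexed (1-based) antichains and decreasing
within even-indexed ones. -/
def canonicalExt (α : List ℕ) : List ℕ :=
  ((List.range α.length).map fun k =>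
    if k % 2 = 0 then (blockFS α k).sort (· ≤ ·)
    else ((blockFS α k).sort (· ≤ ·)).reverse).flatten

namespace CD


lemma mem_getD_flatten {x : ℕ} : ∀ (S : List (List ℕ)) (j : ℕ), j < S.length →
    x ∈ S.getD j [] → x ∈ S.flatten
  | m :: S', 0, _, hx => by simp only [List.getD_cons_zero] at hx; simp [List.mem_flatten]; tauto
  | m :: S', j+1, hj, hx => by
    have := mem_getD_flatten S' j (by simpa using hj) (by simpa using hx)
    simp [List.mem_flatten] at this ⊢; tauto

lemma seg_disj {x : ℕ} : ∀ (S : List (List ℕ)), S.flatten.Nodup → ∀ i j : ℕ, i < j →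
    j < S.length → x ∈ S.getD i [] → x ∈ S.getD j [] → False
  | m :: S', hnd, 0, j+1, _, hj, hx, hy => by
    rw [List.flatten_cons, List.nodup_append] at hnd
    exact hnd.2.2 x (by simpa using hx)
      x (mem_getD_flatten S' j (by simpa using hj) (by simpa using hy)) rfl
  | m :: S', hnd, i+1, j+1, hij, hj, hx, hy => by
    rw [List.flatten_cons, List.nodup_append] at hnd
    exact seg_disj S' hnd.2.1 i j (by omega) (by simpa using hj)
      (by simpa using hx) (by simpa using hy)

lemma idx_lt {x y : ℕ} : ∀ (S : List (List ℕ)), S.flatten.Nodup → ∀ i j : ℕ, i < j →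
    j < S.length → x ∈ S.getD i [] → y ∈ S.getD j [] →
    S.flatten.idxOf x < S.flatten.idxOf y
  | m :: S', hnd, 0, j+1, _, hj, hx, hy => by
    rw [List.flatten_cons, List.nodup_append] at hnd
    have hx' : x ∈ m := by simpa using hx
    have hy' : y ∈ S'.flatten := mem_getD_flatten S' j (by simpa using hj) (by simpa using hy)
    have hym : y ∉ m := fun hym => hnd.2.2 y hym y hy' rfl
    rw [List.flatten_cons, List.idxOf_append_of_mem hx', List.idxOf_append_of_notMem hym]
    calc List.idxOf x m < m.length := List.idxOf_lt_length_iff.2 hx'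
      _ ≤ m.length + List.idxOf y S'.flatten := Nat.le_add_right _ _
  | m :: S', hnd, i+1, j+1, hij, hj, hx, hy => by
    rw [List.flatten_cons, List.nodup_append] at hnd
    have hx' : x ∈ S'.flatten := mem_getD_flatten S' i (by simp only [List.length_cons] at hj; omega) (by simpa using hx)
    have hy' : y ∈ S'.flatten := mem_getD_flatten S' j (by simpa using hj) (by simpa using hy)
    have hxm : x ∉ m := fun h => hnd.2.2 x h x hx' rfl
    have hym : y ∉ m := fun h => hnd.2.2 y h y hy' rfl
    rw [List.flatten_cons, List.idxOf_append_of_notMem hxm,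
      List.idxOf_append_of_notMem hym]
    have := idx_lt S' hnd.2.1 i j (by omega) (by simpa using hj)
      (by simpa using hx) (by simpa using hy)
    omega

lemma mem_foldr_union (K : List (Finset ℕ)) (x : ℕ) :
    x ∈ K.foldr (· ∪ ·) ∅ ↔ ∃ i, i < K.length ∧ x ∈ K.getD i ∅ := by
  induction K with
  | nil => simp
  | cons b K ih =>
    simp only [List.foldr_cons, Finset.mem_union, ih, List.length_cons]
    constructor
    · rintro (h | ⟨i, hi, hx⟩)
      · exact ⟨0, Nat.succ_pos _, by simpa using h⟩
      · exact ⟨i+1, Nat.succ_lt_succ hi, by simpa using hx⟩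
    · rintro ⟨i, hi, hx⟩
      cases i with
      | zero => exact Or.inl (by simpa using hx)
      | succ i => exact Or.inr ⟨i, Nat.lt_of_succ_lt_succ hi, by simpa using hx⟩

lemma foldr_union_map (S : List (List ℕ)) :
    (S.map List.toFinset).foldr (· ∪ ·) ∅ = S.flatten.toFinset := by
  induction S with
  | nil => simp
  | cons m S ih => simp [ih]

lemma getD_map (S : List (List ℕ)) (i : ℕ) (h : i < S.length) :
    (S.map List.toFinset).getD i ∅ = (S.getD i []).toFinset := by
  rw [List.getD_eq_getElem _ _ (by simpa using h), List.getD_eq_getElem _ _ h,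
    List.getElem_map]



lemma mem_linextFinset (Q : LabeledPoset) (π : List ℕ) :
    π ∈ linextFinset Q ↔ IsLinext Q π := by
  constructor
  · exact fun h => (Finset.mem_filter.1 h).2
  · intro h
    refine Finset.mem_filter.2 ⟨?_, h⟩
    rw [List.mem_toFinset, List.mem_permutations]
    exact List.perm_of_nodup_nodup_toFinset_eq h.1 (Q.labels.sort_nodup _)
      (by rw [h.2.1, Finset.sort_toFinset])

lemma sub_block (T : Finset (Finset ℕ))
    (hdisj : ∀ b ∈ T, ∀ b' ∈ T, b ≠ b' → Disjoint b b') :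
    ∀ m : List ℕ, m.IsChain (sameBlock T) → (∀ x ∈ m, ∃ b ∈ T, x ∈ b) →
      m = [] ∨ ∃ b ∈ T, ∀ x ∈ m, x ∈ b := by
  intro m
  induction m with
  | nil => exact fun _ _ => Or.inl rfl
  | cons a m ih =>
    intro hch hcov
    right
    rcases ih hch.tail (fun x hx => hcov x (List.mem_cons_of_mem _ hx)) with hm | ⟨b, hb, hball⟩
    · subst hm
      obtain ⟨b, hb, hab⟩ := hcov a (List.mem_cons_self)
      exact ⟨b, hb, by simp [hab]⟩
    · cases m with
      | nil =>
        obtain ⟨b', hb', hab⟩ := hcov a (List.mem_cons_self)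
        exact ⟨b', hb', by simp [hab]⟩
      | cons c m' =>
        have hsame : sameBlock T a c := (List.isChain_cons_cons.1 hch).1
        obtain ⟨b'', hb'', hab, hcb⟩ := hsame
        have hbb : b'' = b := by
          by_contra hne
          exact (Finset.disjoint_left.1 (hdisj _ hb'' _ hb hne)) hcb
            (hball c (List.mem_cons_self))
        subst hbb
        refine ⟨b'', hb'', fun x hx => ?_⟩
        rcases List.mem_cons.1 hx with rfl | hx
        · exact hab
        · exact hball x hx

lemma no_overlap {α : Type*} (R : α → α → Bool) (g a' : List α) (L' M' : List (List α))
    (hg : g ≠ []) (ha : a' ≠ [])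
    (hchain : (g ++ a').IsChain fun x y => R x y)
    (hbdy : (g :: L').IsChain fun p q => ∃ hp hq, R (p.getLast hp) (q.head hq) = false)
    (hL' : [] ∉ L')
    (hfl : L'.flatten = a' ++ M'.flatten) : False := by
  have hL'ne : L' ≠ [] := by
    intro h; subst h
    simp only [List.flatten_nil] at hfl
    exact ha (List.append_eq_nil_iff.1 hfl.symm).1
  obtain ⟨g₂, L'', rfl⟩ := List.exists_cons_of_ne_nil hL'ne
  have hg₂ : g₂ ≠ [] := fun h => hL' (h ▸ List.mem_cons_self)
  obtain ⟨x, t, rfl⟩ := List.exists_cons_of_ne_nil hg₂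
  obtain ⟨z, s, rfl⟩ := List.exists_cons_of_ne_nil ha
  have hxz : x = z := by
    rw [List.flatten_cons] at hfl
    simpa using congrArg (·.head?) hfl
  subst hxz
  -- from hbdy: R (g.getLast _) z = false
  obtain ⟨hp, hq, hfalse⟩ := (List.isChain_cons_cons.1 hbdy).1
  -- from hchain: R (g.getLast _) z = true
  rw [List.isChain_append] at hchain
  have htrue := hchain.2.2 (g.getLast hg) (by rw [List.getLast?_eq_getLast hg]; rfl)
    x (by rfl)
  rw [show (x :: t).head hq = x from rfl] at hfalse
  rw [hfalse] at htrue
  exact Bool.false_ne_true (by simpa using htrue)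

lemma splitBy_unique {α : Type*} (R : α → α → Bool) :
    ∀ (L M : List (List α)),
      [] ∉ L → (∀ m ∈ L, m.IsChain fun x y => R x y) →
      L.IsChain (fun p q => ∃ hp hq, R (p.getLast hp) (q.head hq) = false) →
      [] ∉ M → (∀ m ∈ M, m.IsChain fun x y => R x y) →
      M.IsChain (fun p q => ∃ hp hq, R (p.getLast hp) (q.head hq) = false) →
      L.flatten = M.flatten → L = M := by
  intro L
  induction L with
  | nil =>
    intro M _ _ _ hMnil _ _ hfl
    rcases M with _ | ⟨h, M'⟩
    · rfl
    · exfalso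
      rw [List.flatten_nil, List.flatten_cons] at hfl
      have := (List.append_eq_nil_iff.1 hfl.symm).1
      exact hMnil (this ▸ List.mem_cons_self)
  | cons g L' ih =>
    intro M hLnil hLch hLbd hMnil hMch hMbd hfl
    have hgne : g ≠ [] := fun h => hLnil (h ▸ List.mem_cons_self)
    rcases M with _ | ⟨h, M'⟩
    · exfalso
      rw [List.flatten_cons, List.flatten_nil] at hfl
      exact hgne (List.append_eq_nil_iff.1 hfl).1
    have hhne : h ≠ [] := fun hh => hMnil (hh ▸ List.mem_cons_self)
    rw [List.flatten_cons, List.flatten_cons] at hfl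
    have hgh : g = h := by
      rcases List.append_eq_append_iff.1 hfl with ⟨a', rfl, hfl2⟩ | ⟨c', rfl, hfl2⟩
      · rcases eq_or_ne a' [] with rfl | hane
        · simp
        · exact absurd (no_overlap R g a' L' M' hgne hane
            (hMch _ (List.mem_cons_self)) hLbd
            (fun hc => hLnil (List.mem_cons_of_mem _ hc)) hfl2) (fun h => h)
      · rcases eq_or_ne c' [] with rfl | hcne
        · simp
        · exact absurd (no_overlap R h c' M' L' hhne hcne
            (hLch _ (List.mem_cons_self)) hMbd
            (fun hc => hMnil (List.mem_cons_of_mem _ hc)) hfl2) (fun h => h)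
    subst hgh
    have hfl' : L'.flatten = M'.flatten := by
      exact List.append_cancel_left hfl
    rw [ih M' (fun hc => hLnil (List.mem_cons_of_mem _ hc))
      (fun m hm => hLch m (List.mem_cons_of_mem _ hm)) hLbd.tail
      (fun hc => hMnil (List.mem_cons_of_mem _ hc))
      (fun m hm => hMch m (List.mem_cons_of_mem _ hm)) hMbd.tail hfl']

lemma seg_exists :
    ∀ (π : List ℕ) (K : List (Finset ℕ)),
      π.Nodup → π.toFinset = K.foldr (· ∪ ·) ∅ →
      (∀ b ∈ K, b.Nonempty) →
      (∀ i j, i < j → j < K.length → ∀ x, x ∈ K.getD i ∅ → x ∈ K.getD j ∅ → False) →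
      (∀ i j x y, i < j → j < K.length → x ∈ K.getD i ∅ → y ∈ K.getD j ∅ →
        π.idxOf x < π.idxOf y) →
      ∃ S : List (List ℕ), S.flatten = π ∧ S.map List.toFinset = K ∧ [] ∉ S := by
  intro π
  induction π with
  | nil =>
    intro K _ htf hnonempty _ _
    refine ⟨[], rfl, ?_, by simp⟩
    cases K with
    | nil => rfl
    | cons b K' =>
      exfalso
      obtain ⟨x, hx⟩ := hnonempty b (List.mem_cons_self)
      have hxm : x ∈ ([] : List ℕ).toFinset := by
        rw [htf]; simp only [List.foldr_cons, Finset.mem_union]; exact Or.inl hx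
      simp at hxm
  | cons a π' ih =>
    intro K hnd htf hnonempty hdis hord
    have hnd' : π'.Nodup := (List.nodup_cons.1 hnd).2
    have hamem : a ∉ π' := (List.nodup_cons.1 hnd).1
    have haf : a ∈ K.foldr (· ∪ ·) ∅ := by rw [← htf]; simp
    obtain ⟨ia, hia, haK⟩ := (mem_foldr_union K a).1 haf
    rcases K with _ | ⟨b, K'⟩
    · simp at hia
    have hia0 : ia = 0 := by
      by_contra h0
      obtain ⟨x, hx⟩ := hnonempty b (List.mem_cons_self)
      have := hord 0 ia x a (Nat.pos_of_ne_zero h0) hia (by simpa using hx) haK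
      simp [List.idxOf_cons_self] at this
    subst hia0
    have hab : a ∈ b := by simpa using haK
    have hanotK' : a ∉ K'.foldr (· ∪ ·) ∅ := by
      intro h
      obtain ⟨i', hi', hai'⟩ := (mem_foldr_union K' a).1 h
      exact hdis 0 (i'+1) (Nat.succ_pos _) (by simpa using Nat.succ_lt_succ hi') a
        (by simpa using hab) (by simpa using hai')
    by_cases hba : b.erase a = ∅
    · -- b = {a}
      have hbsingle : b = {a} := by
        rcases (Finset.erase_eq_empty_iff b a).1 hba with h | h
        · exact absurd hab (h ▸ Finset.notMem_empty a)
        · exact h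
      have htf' : π'.toFinset = K'.foldr (· ∪ ·) ∅ := by
        ext x
        rw [List.mem_toFinset]
        constructor
        · intro hx
          have hxa : x ≠ a := fun h => hamem (h ▸ hx)
          have : x ∈ (a :: π').toFinset := by simp [hx]
          rw [htf] at this
          simp only [List.foldr_cons, Finset.mem_union, hbsingle, Finset.mem_singleton] at this
          tauto
        · intro hx
          have hxa : x ≠ a := fun h => hanotK' (h ▸ hx)
          have : x ∈ (a :: π').toFinset := by
            rw [htf]; simp only [List.foldr_cons, Finset.mem_union]; exact Or.inr hx
          simp only [List.toFinset_cons, Finset.mem_insert, List.mem_toFinset] at this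
          tauto
      obtain ⟨S', hS'fl, hS'map, hS'nil⟩ := ih K' hnd' htf'
        (fun c hc => hnonempty c (List.mem_cons_of_mem _ hc))
        (fun i j hij hj x hx hy => hdis (i+1) (j+1) (Nat.succ_lt_succ hij)
          (by simpa using Nat.succ_lt_succ hj) x (by simpa using hx) (by simpa using hy))
        (fun i j x y hij hj hx hy => by
          have hxf : x ∈ K'.foldr (· ∪ ·) ∅ := (mem_foldr_union K' x).2 ⟨i, by omega, hx⟩
          have hyf : y ∈ K'.foldr (· ∪ ·) ∅ := (mem_foldr_union K' y).2 ⟨j, hj, hy⟩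
          have hxa : x ≠ a := fun h => hanotK' (h ▸ hxf)
          have hya : y ≠ a := fun h => hanotK' (h ▸ hyf)
          have := hord (i+1) (j+1) x y (Nat.succ_lt_succ hij)
            (by simpa using Nat.succ_lt_succ hj) (by simpa using hx) (by simpa using hy)
          rwa [List.idxOf_cons_ne _ (Ne.symm hxa), List.idxOf_cons_ne _ (Ne.symm hya),
            Nat.succ_lt_succ_iff] at this)
      exact ⟨[a] :: S', by simp [hS'fl], by simp [hS'map, hbsingle], by
        simp only [List.mem_cons]
        rintro (h | h)
        · exact List.cons_ne_nil a [] h.symm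
        · exact hS'nil h⟩
    · -- b ≠ {a}
      have hbe : (b.erase a).Nonempty := Finset.nonempty_iff_ne_empty.2 hba
      have hsub : ∀ i, ((b.erase a) :: K').getD i ∅ ⊆ (b :: K').getD i ∅ := by
        intro i
        cases i with
        | zero => simpa using Finset.erase_subset a b
        | succ i => simp
      have hne_a : ∀ i x, x ∈ ((b.erase a) :: K').getD i ∅ → x ≠ a := by
        intro i x hx
        cases i with
        | zero =>
          simp only [List.getD_cons_zero] at hx
          exact Finset.ne_of_mem_erase hx
        | succ i =>
          simp only [List.getD_cons_succ] at hx
          rcases Nat.lt_or_ge i K'.length with hi | hi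
          · exact fun h => hanotK' ((mem_foldr_union K' a).2 ⟨i, hi, h ▸ hx⟩)
          · rw [List.getD_eq_default _ _ hi] at hx; simp at hx
      have htf' : π'.toFinset = ((b.erase a) :: K').foldr (· ∪ ·) ∅ := by
        ext x
        simp only [List.foldr_cons, Finset.mem_union, List.mem_toFinset, Finset.mem_erase]
        constructor
        · intro hx
          have hxa : x ≠ a := fun h => hamem (h ▸ hx)
          have : x ∈ (a :: π').toFinset := by simp [hx]
          rw [htf] at this
          simp only [List.foldr_cons, Finset.mem_union] at this
          tauto
        · intro hx
          have hxa : x ≠ a := by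
            rcases hx with ⟨h, _⟩ | h
            · exact h
            · exact fun he => hanotK' (he ▸ h)
          have : x ∈ (a :: π').toFinset := by
            rw [htf]; simp only [List.foldr_cons, Finset.mem_union]; tauto
          simp only [List.toFinset_cons, Finset.mem_insert, List.mem_toFinset] at this
          tauto
      obtain ⟨S', hS'fl, hS'map, hS'nil⟩ := ih ((b.erase a) :: K') hnd' htf'
        (by
          intro c hc
          rcases List.mem_cons.1 hc with rfl | hc
          · exact hbe
          · exact hnonempty c (List.mem_cons_of_mem _ hc))
        (fun i j hij hj x hx hy => hdis i j hij (by simpa using hj) x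
          (hsub i hx) (hsub j hy))
        (fun i j x y hij hj hx hy => by
          have hxa := hne_a i x hx
          have hya := hne_a j y hy
          have := hord i j x y hij (by simpa using hj) (hsub i hx) (hsub j hy)
          rwa [List.idxOf_cons_ne _ (Ne.symm hxa), List.idxOf_cons_ne _ (Ne.symm hya),
            Nat.succ_lt_succ_iff] at this)
      have hS'ne : S' ≠ [] := by
        intro h; rw [h] at hS'map; simp at hS'map
      obtain ⟨s0, S'', rfl⟩ := List.exists_cons_of_ne_nil hS'ne
      simp only [List.map_cons, List.cons.injEq] at hS'map
      refine ⟨(a :: s0) :: S'', ?_, ?_, ?_⟩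
      · simp only [List.flatten_cons] at hS'fl ⊢
        rw [List.cons_append, hS'fl]
      · simp only [List.map_cons, List.cons.injEq]
        constructor
        · rw [List.toFinset_cons, hS'map.1, Finset.insert_erase hab]
        · exact hS'map.2
      · simp only [List.mem_cons]
        rintro (h | h)
        · exact List.cons_ne_nil a s0 h.symm
        · exact hS'nil (List.mem_cons_of_mem _ h)


end CD

/-- decomposition of `F(P)` with respect to an antichain-inducing unordered
partition `T`: `F(P) = Σ_{K ∈ 𝕂_{P,T}} F(P_K)`; equivalently, `𝓛(P)` is the disjoint union
over `K ∈ 𝕂_{P,T}` of the permutations whose induced ordered partition is `K`. -/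
theorem chain_decomposition (P : LabeledPoset) (hP : P.IsValid)
    (T : Finset (Finset ℕ))
    (hne : ∀ b ∈ T, b.Nonempty)
    (hdisj : ∀ b ∈ T, ∀ b' ∈ T, b ≠ b' → Disjoint b b')
    (hcover : ∀ x, x ∈ P.labels ↔ ∃ b ∈ T, x ∈ b)
    (hanti : ∀ π ∈ linextFinset P, ∀ b ∈ KT T π, ∀ x ∈ b, ∀ y ∈ b, ¬ P.lt x y) :
    Fp P = (∑ K ∈ (linextFinset P).image (KT T), Fp (opPoset K)) ∧
    ∀ π : List ℕ, π.Nodup → π.toFinset = P.labels →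
      (IsLinext P π ↔ KT T π ∈ (linextFinset P).image (KT T)) := by
  set R : ℕ → ℕ → Bool := fun x y => decide (sameBlock T x y) with hRdef
  have hKT : ∀ π : List ℕ, KT T π = (π.splitBy R).map List.toFinset := fun _ => rfl
  have block_eq : ∀ {b b' : Finset ℕ} {x : ℕ}, b ∈ T → b' ∈ T → x ∈ b → x ∈ b' → b = b' := by
    intro b b' x hb hb' hxb hxb'
    by_contra hne
    exact Finset.disjoint_left.1 (hdisj b hb b' hb' hne) hxb hxb'
  have hblocks : ∀ π₀ ∈ linextFinset P, ∀ m ∈ π₀.splitBy R, ∃ b ∈ T, ∀ x ∈ m, x ∈ b := by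
    intro π₀ h0 m hm
    have hlin := (CD.mem_linextFinset P π₀).1 h0
    have hch : m.IsChain (sameBlock T) :=
      List.IsChain.imp (fun a b h => of_decide_eq_true h) (List.isChain_of_mem_splitBy hm)
    have hcov : ∀ x ∈ m, ∃ b ∈ T, x ∈ b := by
      intro x hx
      refine (hcover x).1 ?_
      rw [← hlin.2.1, List.mem_toFinset, ← List.flatten_splitBy R π₀]
      exact List.mem_flatten.2 ⟨m, hm, hx⟩
    rcases CD.sub_block T hdisj m hch hcov with rfl | h
    · exact absurd hm (List.nil_notMem_splitBy R π₀)
    · exact h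
  have hadj : ∀ π₀ ∈ linextFinset P, ∀ i : ℕ, ∀ hi : i + 1 < (π₀.splitBy R).length,
      ∀ x ∈ (π₀.splitBy R)[i]'(by omega), ∀ y ∈ (π₀.splitBy R)[i+1]'hi,
        ¬ sameBlock T x y := by
    intro π₀ h0 i hi x hx y hy hsame
    have hgl := List.isChain_iff_getElem.1 (List.isChain_getLast_head_splitBy R π₀) i (by omega)
    obtain ⟨hm, hm', hfalse⟩ := hgl
    obtain ⟨b, hbT, hball⟩ := hblocks π₀ h0 ((π₀.splitBy R)[i]'(by omega))
      (List.getElem_mem (by omega))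
    obtain ⟨b', hb'T, hb'all⟩ := hblocks π₀ h0 ((π₀.splitBy R)[i+1]'hi)
      (List.getElem_mem hi)
    have hbb' : b ≠ b' := by
      intro h; subst h
      have hsb : sameBlock T (((π₀.splitBy R)[i]'(by omega)).getLast hm)
          (((π₀.splitBy R)[i+1]'hi).head hm') :=
        ⟨b, hbT, hball _ (List.getLast_mem hm), hb'all _ (List.head_mem hm')⟩
      have ht : R (((π₀.splitBy R)[i]'(by omega)).getLast hm)
          (((π₀.splitBy R)[i+1]'hi).head hm') = true := decide_eq_true hsb
      rw [hfalse] at ht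
      exact Bool.false_ne_true ht
    obtain ⟨c, hcT, hxc, hyc⟩ := hsame
    exact hbb' ((block_eq hcT hbT hxc (hball x hx)).symm.trans
      (block_eq hcT hb'T hyc (hb'all y hy)))
  have main4 : ∀ π : List ℕ, π.Nodup → IsLinext (opPoset (KT T π)) π := by
    intro π hnd
    refine ⟨hnd, ?_, ?_⟩
    · show π.toFinset = (KT T π).foldr (· ∪ ·) ∅
      rw [hKT, CD.foldr_union_map, List.flatten_splitBy]
    · rintro x y ⟨i, j, hij, hj, hx, hy⟩
      have hjlen : j < (π.splitBy R).length := by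
        rw [hKT, List.length_map] at hj; exact hj
      rw [hKT, CD.getD_map _ _ (by omega), List.mem_toFinset] at hx
      rw [hKT, CD.getD_map _ _ hjlen, List.mem_toFinset] at hy
      have hnd' : (π.splitBy R).flatten.Nodup := by
        rw [List.flatten_splitBy]; exact hnd
      have := CD.idx_lt (π.splitBy R) hnd' i j hij hjlen hx hy
      rwa [List.flatten_splitBy] at this
  have main1 : ∀ π₀ ∈ linextFinset P, ∀ π : List ℕ, π.Nodup → KT T π = KT T π₀ →
      IsLinext P π := by
    intro π₀ h0 π hnd hKeq
    have hlin0 := (CD.mem_linextFinset P π₀).1 h0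
    have hfold : (KT T π₀).foldr (· ∪ ·) ∅ = P.labels := by
      rw [hKT, CD.foldr_union_map, List.flatten_splitBy, hlin0.2.1]
    have htf : π.toFinset = P.labels := by
      rw [← hfold, ← hKeq, hKT, CD.foldr_union_map, List.flatten_splitBy]
    refine ⟨hnd, htf, ?_⟩
    intro x y hxy
    have hx : x ∈ P.labels := (hP.2.1 x y hxy).1
    have hy : y ∈ P.labels := (hP.2.1 x y hxy).2
    obtain ⟨i, hi, hxi⟩ := (CD.mem_foldr_union _ x).1 (hfold ▸ hx)
    obtain ⟨j, hj, hyj⟩ := (CD.mem_foldr_union _ y).1 (hfold ▸ hy)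
    have hij_ne : i ≠ j := by
      rintro rfl
      have hbK : (KT T π₀).getD i ∅ ∈ KT T π₀ := by
        rw [List.getD_eq_getElem _ _ hi]; exact List.getElem_mem hi
      exact hanti π₀ h0 _ hbK x hxi y hyj hxy
    have hlen0 : (KT T π₀).length = (π₀.splitBy R).length := by
      rw [hKT, List.length_map]
    have hnd0 : (π₀.splitBy R).flatten.Nodup := by
      rw [List.flatten_splitBy]; exact hlin0.1
    have hxi0 : x ∈ (π₀.splitBy R).getD i [] := by
      rw [hKT, CD.getD_map _ _ (by omega), List.mem_toFinset] at hxi; exact hxi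
    have hyj0 : y ∈ (π₀.splitBy R).getD j [] := by
      rw [hKT, CD.getD_map _ _ (by omega), List.mem_toFinset] at hyj; exact hyj
    have hij : i < j := by
      rcases Nat.lt_or_ge i j with h | h
      · exact h
      · exfalso
        have := CD.idx_lt (π₀.splitBy R) hnd0 j i (by omega) (by omega) hyj0 hxi0
        rw [List.flatten_splitBy] at this
        exact absurd (hlin0.2.2 x y hxy) (by omega)
    have hlen : (π.splitBy R).length = (KT T π₀).length := by
      rw [← hKeq, hKT, List.length_map]
    have hxi' : x ∈ (π.splitBy R).getD i [] := by
      have h1 : x ∈ (KT T π).getD i ∅ := by rw [hKeq]; exact hxi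
      rw [hKT, CD.getD_map _ _ (by omega), List.mem_toFinset] at h1
      exact h1
    have hyj' : y ∈ (π.splitBy R).getD j [] := by
      have h1 : y ∈ (KT T π).getD j ∅ := by rw [hKeq]; exact hyj
      rw [hKT, CD.getD_map _ _ (by omega), List.mem_toFinset] at h1
      exact h1
    have hndπ : (π.splitBy R).flatten.Nodup := by
      rw [List.flatten_splitBy]; exact hnd
    have := CD.idx_lt (π.splitBy R) hndπ i j hij (by omega) hxi' hyj'
    rwa [List.flatten_splitBy] at this
  have key : ∀ π₀ ∈ linextFinset P,
      linextFinset (opPoset (KT T π₀))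
        = (linextFinset P).filter (fun π => KT T π = KT T π₀) := by
    intro π₀ h0
    have hlin0 := (CD.mem_linextFinset P π₀).1 h0
    have hlen0 : (KT T π₀).length = (π₀.splitBy R).length := by
      rw [hKT, List.length_map]
    have hnd0 : (π₀.splitBy R).flatten.Nodup := by
      rw [List.flatten_splitBy]; exact hlin0.1
    ext π
    rw [CD.mem_linextFinset, Finset.mem_filter, CD.mem_linextFinset]
    constructor
    · intro hop
      have hnd := hop.1
      have hKeq : KT T π = KT T π₀ := by
        obtain ⟨S, hSfl, hSmap, hSnil⟩ := CD.seg_exists π (KT T π₀) hnd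
          hop.2.1
          (by
            intro c hc
            rw [hKT] at hc
            obtain ⟨m, hm, rfl⟩ := List.mem_map.1 hc
            obtain ⟨z, hz⟩ := List.exists_mem_of_ne_nil m (List.ne_nil_of_mem_splitBy hm)
            exact ⟨z, List.mem_toFinset.2 hz⟩)
          (by
            intro i j hij hj x hxi hyj
            rw [hKT, CD.getD_map _ _ (by omega), List.mem_toFinset] at hxi
            rw [hKT, CD.getD_map _ _ (by omega), List.mem_toFinset] at hyj
            exact CD.seg_disj (π₀.splitBy R) hnd0 i j hij (by omega) hxi hyj)
          (by
            intro i j x y hij hj hxi hyj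
            exact hop.2.2 x y ⟨i, j, hij, hj, hxi, hyj⟩)
        have hchS : ∀ m ∈ S, ∃ b ∈ T, ∀ x ∈ m, x ∈ b := by
          intro m hm
          have hmem : m.toFinset ∈ (π₀.splitBy R).map List.toFinset := by
            rw [← hKT, ← hSmap]
            exact List.mem_map_of_mem hm
          obtain ⟨m₀, hm₀, hmeq⟩ := List.mem_map.1 hmem
          obtain ⟨b, hbT, hball⟩ := hblocks π₀ h0 m₀ hm₀
          exact ⟨b, hbT, fun x hx =>
            hball x (List.mem_toFinset.1 (hmeq ▸ List.mem_toFinset.2 hx))⟩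
        have hSlen : S.length = (π₀.splitBy R).length := by
          have h1 := congrArg List.length hSmap
          rw [List.length_map, hKT, List.length_map] at h1
          exact h1
        have hmapeq : S.map List.toFinset = (π₀.splitBy R).map List.toFinset := by
          rw [hSmap, hKT]
        have hsplit : π.splitBy R = S := by
          apply CD.splitBy_unique R
          · exact List.nil_notMem_splitBy R π
          · exact fun m hm => List.isChain_of_mem_splitBy hm
          · exact List.isChain_getLast_head_splitBy R π
          · exact hSnil
          · intro m hm
            obtain ⟨b, hbT, hball⟩ := hchS m hm
            apply List.Pairwise.isChain
            apply List.pairwise_of_forall_mem_list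
            intro x hx y hy
            exact decide_eq_true ⟨b, hbT, hball x hx, hball y hy⟩
          · rw [List.isChain_iff_getElem]
            intro i hi
            have hi1 : i + 1 < S.length := by omega
            have hne1 : S[i]'(by omega) ≠ [] := fun h => hSnil (h ▸ List.getElem_mem (by omega))
            have hne2 : S[i+1]'hi1 ≠ [] := fun h => hSnil (h ▸ List.getElem_mem hi1)
            refine ⟨hne1, hne2, ?_⟩
            apply decide_eq_false
            intro hsame
            have htf1 : (S[i]'(by omega)).toFinset
                = ((π₀.splitBy R)[i]'(by omega)).toFinset := by
              have h1 := List.getElem_of_eq hmapeq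
                (i := i) (by rw [List.length_map]; omega)
              rwa [List.getElem_map, List.getElem_map] at h1
            have htf2 : (S[i+1]'hi1).toFinset
                = ((π₀.splitBy R)[i+1]'(by omega)).toFinset := by
              have h1 := List.getElem_of_eq hmapeq
                (i := i+1) (by rw [List.length_map]; omega)
              rwa [List.getElem_map, List.getElem_map] at h1
            have hgl : (S[i]'(by omega)).getLast hne1 ∈ (π₀.splitBy R)[i]'(by omega) := by
              have h2 : (S[i]'(by omega)).getLast hne1 ∈ (S[i]'(by omega)).toFinset :=
                List.mem_toFinset.2 (List.getLast_mem hne1)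
              rw [htf1] at h2
              exact List.mem_toFinset.1 h2
            have hhd : (S[i+1]'hi1).head hne2 ∈ (π₀.splitBy R)[i+1]'(by omega) := by
              have h2 : (S[i+1]'hi1).head hne2 ∈ (S[i+1]'hi1).toFinset :=
                List.mem_toFinset.2 (List.head_mem hne2)
              rw [htf2] at h2
              exact List.mem_toFinset.1 h2
            exact hadj π₀ h0 i (by omega) _ hgl _ hhd hsame
          · rw [List.flatten_splitBy, hSfl]
        rw [hKT, hsplit, hSmap]
      exact ⟨main1 π₀ h0 π hnd hKeq, hKeq⟩
    · rintro ⟨hlin, hKeq⟩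
      have h4 := main4 π hlin.1
      rwa [hKeq] at h4
  constructor
  · refine (Finset.sum_image' (fun π => Lqs (Cruns π)) ?_).symm
    intro π₀ h0
    show ∑ πx ∈ linextFinset (opPoset (KT T π₀)), Lqs (Cruns πx) = _
    rw [key π₀ h0]
  · intro π hnd htf
    constructor
    · intro hlin
      exact Finset.mem_image_of_mem (KT T) ((CD.mem_linextFinset P π).2 hlin)
    · intro hmem
      obtain ⟨π₀, h0, hKeq⟩ := Finset.mem_image.1 hmem
      exact main1 π₀ h0 π hnd hKeq.symm

end
end

section
/- For 1 ≤ r ≤ n−1, the uniform matroid U_{r,n} of rank r on an n-element ground set (whose bases are all r-element subsets of the ground set) satisfies F(U_{r,n}) = C(n,r) · N_{(r,n−r)}, where C(n,r) is the binomial coefficient. -/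
noncomputable section
open scoped Classical

/-! ### Auxiliary lemmas for Statement 8 -/

lemma exists_indexOf_iff (S : Finset ℕ) (c x : ℕ) :
    (∃ e ∈ S, x = c + (S.sort (· ≤ ·)).idxOf e + 1) ↔ x ∈ Finset.Ioc c (c + S.card) := by
  constructor
  · rintro ⟨e, he, rfl⟩
    have h : (S.sort (· ≤ ·)).idxOf e < (S.sort (· ≤ ·)).length :=
      List.idxOf_lt_length_iff.2 ((Finset.mem_sort _).2 he)
    rw [Finset.length_sort] at h
    simp only [Finset.mem_Ioc]; omega
  · intro hx
    rw [Finset.mem_Ioc] at hx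
    have hi : x - c - 1 < (S.sort (· ≤ ·)).length := by rw [Finset.length_sort]; omega
    refine ⟨(S.sort (· ≤ ·))[x - c - 1], (Finset.mem_sort _).1 (List.getElem_mem _), ?_⟩
    rw [List.Nodup.idxOf_getElem (Finset.sort_nodup _ _)]
    omega

lemma blockFS_rn_zero (n r : ℕ) (hr : r ≤ n) :
    blockFS [r, n - r] 0 = Finset.Ioc (n - r) n := by
  have h0 : blockStart [r, n - r] 0 = n - r := by
    rw [blockStart]
    norm_num [oddSumBelow, evenSumBelow, Finset.sum_filter, Finset.sum_range_succ]
  rw [blockFS, h0, List.getD_cons_zero]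
  congr 1
  omega

lemma blockFS_rn_one (n r : ℕ) :
    blockFS [r, n - r] 1 = Finset.Ioc 0 (n - r) := by
  have h1 : blockStart [r, n - r] 1 = 0 := by
    rw [blockStart]
    norm_num [oddSumBelow, Finset.sum_filter, Finset.sum_range_succ]
  rw [blockFS, h1, List.getD_cons_succ, List.getD_cons_zero, Nat.zero_add]

lemma Pcomp_rn_lt (n r : ℕ) (hr : r ≤ n) (x y : ℕ) :
    (∃ k k', k < k' ∧ k' < ([r, n - r] : List ℕ).length ∧
      x ∈ blockFS [r, n - r] k ∧ y ∈ blockFS [r, n - r] k') ↔ x ∈ Finset.Ioc (n - r) n ∧ y ∈ Finset.Ioc 0 (n - r) := by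
  constructor
  · rintro ⟨k, k', hkk, hk2, hx, hy⟩
    simp only [List.length_cons, List.length_nil] at hk2
    have hk0 : k = 0 := by omega
    have hk1 : k' = 1 := by omega
    subst hk0; subst hk1
    rw [blockFS_rn_zero n r hr] at hx
    rw [blockFS_rn_one n r] at hy
    exact ⟨hx, hy⟩
  · rintro ⟨hx, hy⟩
    exact ⟨0, 1, by omega, by simp, by rwa [blockFS_rn_zero n r hr],
      by rwa [blockFS_rn_one n r]⟩

/-- for the uniform matroid `U_{r,n}` (whose bases are all `r`-subsets of the
`n`-element ground set), `F(U_{r,n}) = C(n,r) · N_{(r,n−r)}`. -/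
theorem uniform_matroid_F (M : Matroid ℕ) (E : Finset ℕ) (hE : M.E = ↑E)
    (n r : ℕ) (hcard : E.card = n) (hr : 1 ≤ r) (hrn : r ≤ n - 1)
    (hU : ∀ B : Set ℕ, M.IsBase B ↔ B ⊆ ↑E ∧ B.ncard = r) :
    Fm M = (n.choose r : ℚ) • Nqs [r, n - r] := by
  classical
  have hn2 : 2 ≤ n := by omega
  have hrle : r ≤ n := by omega
  have hfin : M.E.Finite := by rw [hE]; exact E.finite_toSet
  have hg : groundFinset M = E := by
    rw [groundFinset, dif_pos hfin]
    apply Finset.coe_injective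
    rw [Set.Finite.coe_toFinset, hE]
  have hfilter : E.powerset.filter (fun B : Finset ℕ => M.IsBase (↑B : Set ℕ)) = E.powersetCard r := by
    ext B
    simp only [Finset.mem_filter, Finset.mem_powerset, Finset.mem_powersetCard, hU,
      Set.ncard_coe_finset, Finset.coe_subset]
    tauto
  have key : ∀ B ∈ E.powersetCard r,
      basePoset E (fun B => M.IsBase ↑B) B = Pcomp [r, n - r] := by
    intro B hB
    rw [Finset.mem_powersetCard] at hB
    obtain ⟨hBE, hBr⟩ := hB
    have hcob : (E \ B).card = n - r := by rw [Finset.card_sdiff_of_subset hBE, hcard, hBr]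
    have h1 : ∀ x, (∃ e ∈ B, x = labelOfIn E B e) ↔ x ∈ Finset.Ioc (n - r) n := by
      intro x
      have hnn : n - r + r = n := by omega
      have h := exists_indexOf_iff B (n - r) x
      rw [hBr, hnn] at h
      rw [← h]
      apply exists_congr; intro e
      constructor
      · rintro ⟨he, rfl⟩; exact ⟨he, by rw [labelOfIn, if_pos he, hcob]⟩
      · rintro ⟨he, rfl⟩; exact ⟨he, by rw [labelOfIn, if_pos he, hcob]⟩
    have h2 : ∀ y, (∃ e' ∈ E \ B, y = labelOfIn E B e') ↔ y ∈ Finset.Ioc 0 (n - r) := by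
      intro y
      have h := exists_indexOf_iff (E \ B) 0 y
      rw [hcob, Nat.zero_add] at h
      rw [← h]
      apply exists_congr; intro e'
      constructor
      · rintro ⟨he, rfl⟩
        have hnb : e' ∉ B := (Finset.mem_sdiff.1 he).2
        exact ⟨he, by rw [labelOfIn, if_neg hnb, Nat.zero_add]⟩
      · rintro ⟨he, rfl⟩
        have hnb : e' ∉ B := (Finset.mem_sdiff.1 he).2
        exact ⟨he, by rw [labelOfIn, if_neg hnb, Nat.zero_add]⟩
    rw [basePoset, Pcomp]
    congr 1
    · rw [hcard]
      congr 1
      simp only [List.sum_cons, List.sum_nil]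
      omega
    · funext x y
      apply propext
      rw [Pcomp_rn_lt n r hrle]
      constructor
      · rintro ⟨e, he, e', he', hx, hy, -⟩
        exact ⟨(h1 x).1 ⟨e, he, hx⟩, (h2 y).1 ⟨e', he', hy⟩⟩
      · rintro ⟨hx, hy⟩
        obtain ⟨e, he, hxe⟩ := (h1 x).2 hx
        obtain ⟨e', he', hye⟩ := (h2 y).2 hy
        refine ⟨e, he, e', he', hxe, hye, ?_⟩
        rw [hU]
        have hnb : e' ∉ B := (Finset.mem_sdiff.1 he').2
        constructor
        · rw [Finset.coe_subset]
          intro z hz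
          rcases Finset.mem_insert.1 hz with rfl | hz
          · exact (Finset.mem_sdiff.1 he').1
          · exact hBE (Finset.erase_subset _ _ hz)
        · rw [Set.ncard_coe_finset, Finset.card_insert_of_notMem
            (fun h => hnb (Finset.erase_subset _ _ h)), Finset.card_erase_of_mem he, hBr]
          have : 1 ≤ r := hr
          omega
  rw [Fm, FmOf, hg, hfilter]
  rw [Finset.sum_congr rfl (fun B hB => by rw [key B hB])]
  rw [Finset.sum_const, Finset.card_powersetCard, hcard, Nqs,
    ← Nat.cast_smul_eq_nsmul ℚ]

end
end

section
/- Let λ = (λ_1,…,λ_t) be a composition with t ≥ 2 parts and |λ| = n, let 1 ≤ s < t, set a = λ_1+⋯+λ_s and b = λ_{s+1}+⋯+λ_t. Realize M_λ on the ground set {e_1,…,e_n} of standard basis vectors of ℝ^n with parallelism classes the consecutive blocks of sizes λ_1,…,λ_t; realize M_α (for α = (a, λ_{s+1},…,λ_t)) by merging the first s blocks into one block of size a; realize M_β (for β = (λ_1,…,λ_s, b)) by merging the last t−s blocks into one block of size b; and realize M_μ (for μ = (a,b)) with the two blocks of sizes a and b. Then Q(M_λ) = Q(M_α) ∪ Q(M_β),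 and Q(M_α) ∩ Q(M_β) = Q(M_μ) is a face of both Q(M_α) and Q(M_β); in particular this is a matroid base polytope decomposition (a split) of Q(M_λ). -/
noncomputable section
open scoped Classical

/-! ## Auxiliary material for Statement 11 -/

section Statement11Aux

open Finset

/-- Sum of coordinates over a finite index set, as a linear map. -/
def coordSum (s : Finset ℕ) : (ℕ → ℝ) →ₗ[ℝ] ℝ where
  toFun x := ∑ i ∈ s, x i
  map_add' x y := by simp [Finset.sum_add_distrib]
  map_smul' c x := by simp [Finset.mul_sum]

lemma coordSum_apply (s : Finset ℕ) (x : ℕ → ℝ) : coordSum s x = ∑ i ∈ s, x i := rfl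

lemma hull_subset_le (f : (ℕ → ℝ) →ₗ[ℝ] ℝ) {S : Set (ℕ → ℝ)} {r : ℝ}
    (h : ∀ v ∈ S, f v ≤ r) : convexHull ℝ S ⊆ {x | f x ≤ r} :=
  convexHull_min h (convex_halfSpace_le f.isLinear r)

lemma hull_subset_eq (f : (ℕ → ℝ) →ₗ[ℝ] ℝ) {S : Set (ℕ → ℝ)} {r : ℝ}
    (h : ∀ v ∈ S, f v = r) : convexHull ℝ S ⊆ {x | f x = r} :=
  convexHull_min h (convex_hyperplane f.isLinear r)

/-- The face lemma: a point of the hull lying on a supporting hyperplane is in the hull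
of the vertices on that hyperplane. -/
lemma face_hull (f : (ℕ → ℝ) →ₗ[ℝ] ℝ) (S : Set (ℕ → ℝ))
    (hle : ∀ v ∈ S, f v ≤ 1)
    {x : ℕ → ℝ} (hx : x ∈ convexHull ℝ S) (hfx : f x = 1) :
    x ∈ convexHull ℝ {v | v ∈ S ∧ f v = 1} := by
  classical
  rw [_root_.convexHull_eq] at hx
  obtain ⟨ι, t, w, z, hw0, hw1, hzS, hcm⟩ := hx
  rw [Finset.centerMass_eq_of_sum_1 _ _ hw1] at hcm
  have hfx' : ∑ i ∈ t, w i * f (z i) = 1 := by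
    rw [← hfx, ← hcm, map_sum]
    exact Finset.sum_congr rfl fun i _ => by rw [map_smul, smul_eq_mul]
  have hzero : ∀ i ∈ t, w i * (1 - f (z i)) = 0 := by
    rw [← Finset.sum_eq_zero_iff_of_nonneg
      (fun i hi => mul_nonneg (hw0 i hi) (by linarith [hle _ (hzS i hi)]))]
    have : ∑ i ∈ t, w i * (1 - f (z i)) = (∑ i ∈ t, w i) - ∑ i ∈ t, w i * f (z i) := by
      rw [← Finset.sum_sub_distrib]; exact Finset.sum_congr rfl fun i _ => by ring
    rw [this, hw1, hfx']; ring
  set t' := t.filter (fun i => w i ≠ 0) with ht'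
  have hsub : t' ⊆ t := Finset.filter_subset _ _
  have hw1' : ∑ i ∈ t', w i = 1 := by rw [ht', Finset.sum_filter_ne_zero, hw1]
  have hcm' : ∑ i ∈ t', w i • z i = x := by
    rw [← hcm]
    exact Finset.sum_subset hsub (fun i hi hni => by
      have : w i = 0 := by
        by_contra h; exact hni (Finset.mem_filter.2 ⟨hi, h⟩)
      simp [this])
  have hmem : ∀ i ∈ t', z i ∈ {v | v ∈ S ∧ f v = 1} := by
    intro i hi
    rw [Finset.mem_filter] at hi
    refine ⟨hzS i hi.1, ?_⟩
    have := hzero i hi.1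
    rcases mul_eq_zero.1 this with h | h
    · exact absurd h hi.2
    · linarith
  have := Finset.centerMass_mem_convexHull t'
    (fun i hi => hw0 i (hsub hi)) (by rw [hw1']; norm_num) hmem
  rwa [Finset.centerMass_eq_of_sum_1 _ _ hw1', hcm'] at this

/-- The key exchange lemma for hyperplane splits: a point of the hull on the `f ≤ 1` side
lies in the hull of the vertices with `f ≤ 1`. -/
lemma split_hull (f : (ℕ → ℝ) →ₗ[ℝ] ℝ) (S : Set (ℕ → ℝ))
    (hval : ∀ v ∈ S, f v = 0 ∨ f v = 1 ∨ f v = 2)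
    (hex : ∀ v ∈ S, ∀ u ∈ S, f v = 2 → f u = 0 →
      ∃ p, (p ∈ S ∧ f p = 1) ∧ ∃ q, (q ∈ S ∧ f q = 1) ∧ v + u = p + q)
    {x : ℕ → ℝ} (hx : x ∈ convexHull ℝ S) (hfx : f x ≤ 1) :
    x ∈ convexHull ℝ {v | v ∈ S ∧ f v ≤ 1} := by
  classical
  rw [_root_.convexHull_eq] at hx
  obtain ⟨ι, t, w, z, hw0, hw1, hzS, hcm⟩ := hx
  rw [Finset.centerMass_eq_of_sum_1 _ _ hw1] at hcm
  set t0 := t.filter (fun i => f (z i) = 0) with ht0def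
  set t1 := t.filter (fun i => f (z i) = 1) with ht1def
  set t2 := t.filter (fun i => f (z i) = 2) with ht2def
  have hmem0 : ∀ i ∈ t0, f (z i) = 0 := fun i hi => (Finset.mem_filter.1 hi).2
  have hmem1 : ∀ i ∈ t1, f (z i) = 1 := fun i hi => (Finset.mem_filter.1 hi).2
  have hmem2 : ∀ i ∈ t2, f (z i) = 2 := fun i hi => (Finset.mem_filter.1 hi).2
  have ht0t : t0 ⊆ t := Finset.filter_subset _ _
  have ht1t : t1 ⊆ t := Finset.filter_subset _ _
  have ht2t : t2 ⊆ t := Finset.filter_subset _ _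
  have hdisj01 : Disjoint t0 t1 := by
    rw [Finset.disjoint_left]; intro i h0 h1
    have := hmem0 i h0; have := hmem1 i h1; linarith
  have hdisj012 : Disjoint (t0 ∪ t1) t2 := by
    rw [Finset.disjoint_left]; intro i h01 h2
    have h2' := hmem2 i h2
    rcases Finset.mem_union.1 h01 with h | h
    · have := hmem0 i h; linarith
    · have := hmem1 i h; linarith
  have hcover : (t0 ∪ t1) ∪ t2 = t := by
    apply Finset.Subset.antisymm
    · intro i hi
      rcases Finset.mem_union.1 hi with h | h
      · rcases Finset.mem_union.1 h with h' | h'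
        · exact ht0t h'
        · exact ht1t h'
      · exact ht2t h
    · intro i hi
      rcases hval _ (hzS i hi) with h | h | h
      · exact Finset.mem_union.2 (Or.inl (Finset.mem_union.2 (Or.inl
          (Finset.mem_filter.2 ⟨hi, h⟩))))
      · exact Finset.mem_union.2 (Or.inl (Finset.mem_union.2 (Or.inr
          (Finset.mem_filter.2 ⟨hi, h⟩))))
      · exact Finset.mem_union.2 (Or.inr (Finset.mem_filter.2 ⟨hi, h⟩))
  -- splitting of sums over `t`
  have hsumsplit : ∀ (g : ι → (ℕ → ℝ)),
      ∑ i ∈ t, g i = ∑ i ∈ t0, g i + ∑ i ∈ t1, g i + ∑ i ∈ t2, g i := by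
    intro g
    rw [← hcover, Finset.sum_union hdisj012, Finset.sum_union hdisj01]
  have hsumsplitR : ∀ (g : ι → ℝ),
      ∑ i ∈ t, g i = ∑ i ∈ t0, g i + ∑ i ∈ t1, g i + ∑ i ∈ t2, g i := by
    intro g
    rw [← hcover, Finset.sum_union hdisj012, Finset.sum_union hdisj01]
  set W0 := ∑ i ∈ t0, w i with hW0def
  set W1 := ∑ i ∈ t1, w i with hW1def
  set W2 := ∑ i ∈ t2, w i with hW2def
  have hW0nn : 0 ≤ W0 := Finset.sum_nonneg fun i hi => hw0 i (ht0t hi)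
  have hW2nn : 0 ≤ W2 := Finset.sum_nonneg fun i hi => hw0 i (ht2t hi)
  have hWsum : W0 + W1 + W2 = 1 := by rw [hW0def, hW1def, hW2def, ← hsumsplitR, hw1]
  have hfxval : W1 + 2 * W2 ≤ 1 := by
    have h1 : f x = ∑ i ∈ t, w i * f (z i) := by
      rw [← hcm, map_sum]
      exact Finset.sum_congr rfl fun i _ => by rw [map_smul, smul_eq_mul]
    have h2 : ∑ i ∈ t, w i * f (z i) = W1 + 2 * W2 := by
      rw [hsumsplitR (fun i => w i * f (z i))]
      have e0 : ∑ i ∈ t0, w i * f (z i) = 0 :=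
        Finset.sum_eq_zero fun i hi => by rw [hmem0 i hi, mul_zero]
      have e1 : ∑ i ∈ t1, w i * f (z i) = W1 :=
        Finset.sum_congr rfl fun i hi => by rw [hmem1 i hi, mul_one]
      have e2 : ∑ i ∈ t2, w i * f (z i) = 2 * W2 := by
        rw [hW2def, Finset.mul_sum]
        exact Finset.sum_congr rfl fun i hi => by rw [hmem2 i hi]; ring
      rw [e0, e1, e2]; ring
    have : W1 + 2 * W2 = f x := by rw [h1, h2]
    linarith
  have hW2W0 : W2 ≤ W0 := by linarith
  have hmemle : ∀ i ∈ t0 ∪ t1, z i ∈ {v | v ∈ S ∧ f v ≤ 1} := by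
    intro i hi
    rcases Finset.mem_union.1 hi with h | h
    · exact ⟨hzS i (ht0t h), by have := hmem0 i h; linarith⟩
    · exact ⟨hzS i (ht1t h), by have := hmem1 i h; linarith⟩
  rcases eq_or_lt_of_le hW2nn with hW2z | hW2pos
  · -- no weight on the `f = 2` side
    have hz2 : ∀ i ∈ t2, w i = 0 :=
      (Finset.sum_eq_zero_iff_of_nonneg (fun i hi => hw0 i (ht2t hi))).1 hW2z.symm
    have hw1' : ∑ i ∈ t0 ∪ t1, w i = 1 := by
      rw [Finset.sum_union hdisj01, ← hW0def, ← hW1def]; linarith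
    have hcm' : ∑ i ∈ t0 ∪ t1, w i • z i = x := by
      rw [← hcm, hsumsplit (fun i => w i • z i), Finset.sum_union hdisj01]
      have hz : ∑ i ∈ t2, w i • z i = 0 :=
        Finset.sum_eq_zero fun i hi => by rw [hz2 i hi, zero_smul]
      rw [hz, add_zero]
    have := Finset.centerMass_mem_convexHull (t0 ∪ t1)
      (fun i hi => hw0 i ((Finset.union_subset ht0t ht1t) hi)) (by rw [hw1']; norm_num) hmemle
    rwa [Finset.centerMass_eq_of_sum_1 _ _ hw1', hcm'] at this
  · -- positive weight on the `f = 2` side: exchange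
    have hW0pos : 0 < W0 := lt_of_lt_of_le hW2pos hW2W0
    have hW0ne : W0 ≠ 0 := ne_of_gt hW0pos
    choose! p hp q hq hpq using hex
    -- the new index set
    set t' : Finset (ι ⊕ (ι × ι × Bool)) :=
      (t0 ∪ t1).disjSum (t2 ×ˢ (t0 ×ˢ (Finset.univ : Finset Bool))) with ht'def
    set w' : ι ⊕ (ι × ι × Bool) → ℝ :=
      Sum.elim (fun i => if f (z i) = 0 then w i * ((W0 - W2) / W0) else w i)
        (fun m => w m.1 * w m.2.1 / W0) with hw'def
    set z' : ι ⊕ (ι × ι × Bool) → (ℕ → ℝ) :=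
      Sum.elim z (fun m => if m.2.2 then p (z m.1) (z m.2.1) else q (z m.1) (z m.2.1))
        with hz'def
    have hprodmem : ∀ (m : ι × ι × Bool), m ∈ t2 ×ˢ (t0 ×ˢ (Finset.univ : Finset Bool)) →
        m.1 ∈ t2 ∧ m.2.1 ∈ t0 := by
      intro m hm
      rw [Finset.mem_product] at hm
      exact ⟨hm.1, (Finset.mem_product.1 hm.2).1⟩
    have hPQ : ∀ (m : ι × ι × Bool), m ∈ t2 ×ˢ (t0 ×ˢ (Finset.univ : Finset Bool)) →
        (p (z m.1) (z m.2.1) ∈ S ∧ f (p (z m.1) (z m.2.1)) = 1) ∧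
        (q (z m.1) (z m.2.1) ∈ S ∧ f (q (z m.1) (z m.2.1)) = 1) ∧
        z m.1 + z m.2.1 = p (z m.1) (z m.2.1) + q (z m.1) (z m.2.1) := by
      intro m hm
      obtain ⟨h2, h0⟩ := hprodmem m hm
      exact ⟨hp _ (hzS _ (ht2t h2)) _ (hzS _ (ht0t h0)) (hmem2 _ h2) (hmem0 _ h0),
        hq _ (hzS _ (ht2t h2)) _ (hzS _ (ht0t h0)) (hmem2 _ h2) (hmem0 _ h0),
        hpq _ (hzS _ (ht2t h2)) _ (hzS _ (ht0t h0)) (hmem2 _ h2) (hmem0 _ h0)⟩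
    have w'inl : ∀ i, w' (Sum.inl i) = if f (z i) = 0 then w i * ((W0 - W2) / W0) else w i :=
      fun _ => rfl
    have w'inr : ∀ (m : ι × ι × Bool), w' (Sum.inr m) = w m.1 * w m.2.1 / W0 := fun _ => rfl
    have z'inl : ∀ i, z' (Sum.inl i) = z i := fun _ => rfl
    have z'inr : ∀ (m : ι × ι × Bool), z' (Sum.inr m)
        = if m.2.2 then p (z m.1) (z m.2.1) else q (z m.1) (z m.2.1) := fun _ => rfl
    have hw'0 : ∀ i ∈ t', 0 ≤ w' i := by
      intro i hi
      rw [ht'def] at hi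
      rcases i with i | m
      · rw [Finset.inl_mem_disjSum] at hi
        rw [w'inl]
        split
        · exact mul_nonneg (hw0 _ ((Finset.union_subset ht0t ht1t) hi))
            (div_nonneg (by linarith) (le_of_lt hW0pos))
        · exact hw0 _ ((Finset.union_subset ht0t ht1t) hi)
      · rw [Finset.inr_mem_disjSum] at hi
        obtain ⟨h2, h0⟩ := hprodmem m hi
        rw [w'inr]
        exact div_nonneg (mul_nonneg (hw0 _ (ht2t h2)) (hw0 _ (ht0t h0))) (le_of_lt hW0pos)
    have hmem' : ∀ i ∈ t', z' i ∈ {v | v ∈ S ∧ f v ≤ 1} := by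
      intro i hi
      rw [ht'def] at hi
      rcases i with i | m
      · rw [Finset.inl_mem_disjSum] at hi
        rw [z'inl]
        exact hmemle _ hi
      · rw [Finset.inr_mem_disjSum] at hi
        obtain ⟨hP, hQ, _⟩ := hPQ m hi
        rw [z'inr]
        split
        · exact ⟨hP.1, le_of_eq hP.2⟩
        · exact ⟨hQ.1, le_of_eq hQ.2⟩
    -- sum of the new weights is 1
    have hsum_inl : ∑ i ∈ t0 ∪ t1, w' (Sum.inl i) = (W0 - W2) + W1 := by
      simp only [w'inl]
      rw [Finset.sum_union hdisj01]
      have h0 : ∑ i ∈ t0, (if f (z i) = 0 then w i * ((W0 - W2) / W0) else w i)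
          = W0 - W2 := by
        have e : ∀ i ∈ t0, (if f (z i) = 0 then w i * ((W0 - W2) / W0) else w i)
            = w i * ((W0 - W2) / W0) := fun i hi => if_pos (hmem0 i hi)
        rw [Finset.sum_congr rfl e, ← Finset.sum_mul, ← hW0def]
        field_simp
      have h1 : ∑ i ∈ t1, (if f (z i) = 0 then w i * ((W0 - W2) / W0) else w i) = W1 := by
        have e : ∀ i ∈ t1, (if f (z i) = 0 then w i * ((W0 - W2) / W0) else w i)
            = w i := fun i hi => if_neg (by rw [hmem1 i hi]; norm_num)
        rw [Finset.sum_congr rfl e, ← hW1def]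
      rw [h0, h1]
    have hsum_inr : ∑ m ∈ t2 ×ˢ (t0 ×ˢ (Finset.univ : Finset Bool)), w' (Sum.inr m)
        = 2 * W2 := by
      simp only [w'inr]
      rw [Finset.sum_product]
      have key : ∀ i ∈ t2, ∑ m ∈ t0 ×ˢ (Finset.univ : Finset Bool), w i * w m.1 / W0
          = w i * (2 * W0) / W0 := by
        intro i _
        rw [Finset.sum_product]
        have e : ∀ j ∈ t0, ∑ _b ∈ (Finset.univ : Finset Bool), w i * w j / W0
            = 2 * (w i * w j / W0) := by
          intro j _
          rw [Finset.sum_const]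
          simp [Finset.card_univ, nsmul_eq_mul]
        rw [Finset.sum_congr rfl e, ← Finset.mul_sum, ← Finset.sum_div, ← Finset.mul_sum,
          ← hW0def]
        ring
      rw [Finset.sum_congr rfl key]
      have : ∀ i ∈ t2, w i * (2 * W0) / W0 = 2 * w i := by
        intro i _; field_simp
      rw [Finset.sum_congr rfl this, ← Finset.mul_sum, ← hW2def]
    have hw'1 : ∑ i ∈ t', w' i = 1 := by
      rw [ht'def, Finset.sum_disjSum, hsum_inl, hsum_inr]; linarith
    -- the new center of mass is x
    have hz'x : ∑ i ∈ t', w' i • z' i = x := by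
      rw [ht'def, Finset.sum_disjSum]
      have hinl : ∑ i ∈ t0 ∪ t1, w' (Sum.inl i) • z' (Sum.inl i)
          = ((W0 - W2) / W0) • ∑ i ∈ t0, w i • z i + ∑ i ∈ t1, w i • z i := by
        simp only [w'inl, z'inl]
        rw [Finset.sum_union hdisj01]
        congr 1
        · rw [Finset.smul_sum]
          have e : ∀ i ∈ t0, (if f (z i) = 0 then w i * ((W0 - W2) / W0) else w i) • z i
              = ((W0 - W2) / W0) • (w i • z i) := by
            intro i hi
            rw [if_pos (hmem0 i hi), smul_smul, mul_comm (w i)]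
          exact Finset.sum_congr rfl e
        · have e : ∀ i ∈ t1, (if f (z i) = 0 then w i * ((W0 - W2) / W0) else w i) • z i
              = w i • z i := by
            intro i hi
            rw [if_neg (by rw [hmem1 i hi]; norm_num)]
          exact Finset.sum_congr rfl e
      have hinr : ∑ m ∈ t2 ×ˢ (t0 ×ˢ (Finset.univ : Finset Bool)),
          w' (Sum.inr m) • z' (Sum.inr m)
          = ∑ i ∈ t2, w i • z i + (W2 / W0) • ∑ j ∈ t0, w j • z j := by
        simp only [w'inr, z'inr]
        rw [Finset.sum_product]
        have hin : ∀ i ∈ t2, ∑ m ∈ t0 ×ˢ (Finset.univ : Finset Bool),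
            (w i * w m.1 / W0) • (if m.2 then p (z i) (z m.1) else q (z i) (z m.1))
            = w i • z i + ∑ j ∈ t0, (w i * w j / W0) • z j := by
          intro i hi
          rw [Finset.sum_product]
          have hbool : ∀ j ∈ t0,
              (∑ b ∈ (Finset.univ : Finset Bool),
                (w i * w j / W0) • (if b then p (z i) (z j) else q (z i) (z j)))
              = (w i * w j / W0) • z i + (w i * w j / W0) • z j := by
            intro j hj
            rw [Fintype.sum_bool, if_pos rfl, if_neg (by simp), ← smul_add,
              ← hpq _ (hzS _ (ht2t hi)) _ (hzS _ (ht0t hj)) (hmem2 _ hi) (hmem0 _ hj),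
              smul_add]
          rw [Finset.sum_congr rfl hbool, Finset.sum_add_distrib]
          congr 1
          rw [← Finset.sum_smul]
          congr 1
          rw [← Finset.sum_div, ← Finset.mul_sum, ← hW0def]
          field_simp
        rw [Finset.sum_congr rfl hin, Finset.sum_add_distrib]
        congr 1
        rw [Finset.sum_comm, Finset.smul_sum]
        refine Finset.sum_congr rfl fun j hj => ?_
        rw [← Finset.sum_smul, smul_smul]
        congr 1
        rw [← Finset.sum_div, ← Finset.sum_mul, ← hW2def]
        field_simp
      rw [hinl, hinr, ← hcm, hsumsplit (fun i => w i • z i)]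
      have hAB : (W0 - W2) / W0 + W2 / W0 = 1 := by field_simp; ring
      have hre : ((W0 - W2) / W0) • (∑ i ∈ t0, w i • z i) + ∑ i ∈ t1, w i • z i
          + (∑ i ∈ t2, w i • z i + (W2 / W0) • ∑ j ∈ t0, w j • z j)
          = (((W0 - W2) / W0 + W2 / W0) • ∑ i ∈ t0, w i • z i) + ∑ i ∈ t1, w i • z i
            + ∑ i ∈ t2, w i • z i := by
        rw [add_smul]; abel
      rw [hre, hAB, one_smul]
    have := Finset.centerMass_mem_convexHull t' hw'0 (by rw [hw'1]; norm_num) hmem'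
    rwa [Finset.centerMass_eq_of_sum_1 _ _ hw'1, hz'x] at this

/-! ### Blocks of compositions -/

lemma takeSum_le (l : List ℕ) {i j : ℕ} (h : i ≤ j) : (l.take i).sum ≤ (l.take j).sum := by
  have hj : j = i + (j - i) := by omega
  rw [hj, List.take_add, List.sum_append]
  exact Nat.le_add_right _ _

lemma mem_blockOfComp {l : List ℕ} {k z : ℕ} :
    z ∈ blockOfComp l k ↔ (l.take k).sum < z ∧ z ≤ (l.take (k + 1)).sum := Finset.mem_Ioc

lemma blockOfComp_bounds {l : List ℕ} {k z : ℕ} (hk : k < l.length)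
    (hz : z ∈ blockOfComp l k) : 0 < z ∧ z ≤ l.sum := by
  rw [mem_blockOfComp] at hz
  have h1 : (l.take (k + 1)).sum ≤ (l.take l.length).sum := takeSum_le l (by omega)
  rw [List.take_length] at h1
  omega

lemma exists_blockOfComp : ∀ (l : List ℕ) (z : ℕ), 0 < z → z ≤ l.sum →
    ∃ k, k < l.length ∧ z ∈ blockOfComp l k := by
  intro l
  induction l with
  | nil => intro z hz hzs; simp at hzs; omega
  | cons c l ih =>
    intro z hz hzs
    by_cases h : z ≤ c
    · refine ⟨0, by simp, ?_⟩
      simp [blockOfComp, Finset.mem_Ioc]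
      omega
    · rw [List.sum_cons] at hzs
      obtain ⟨k, hk, hm⟩ := ih (z - c) (by omega) (by omega)
      refine ⟨k + 1, by simpa using Nat.succ_lt_succ hk, ?_⟩
      rw [mem_blockOfComp] at hm ⊢
      simp only [List.take_succ_cons, List.sum_cons] at *
      omega

/-- Membership of a block element on one side of the split threshold determines
the block index. -/
lemma blockOfComp_le_iff {l : List ℕ} {s k z : ℕ} (hz : z ∈ blockOfComp l k) :
    z ≤ (l.take s).sum ↔ k < s := by
  rw [mem_blockOfComp] at hz
  constructor
  · intro h
    by_contra hk'
    have := takeSum_le l (show s ≤ k by omega)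
    omega
  · intro h
    have := takeSum_le l (show k + 1 ≤ s by omega)
    omega

lemma blocksOf_length (l : List ℕ) : (blocksOf l).length = l.length := by
  simp [blocksOf]

lemma blocksOf_getD {l : List ℕ} {i : ℕ} (h : i < l.length) :
    (blocksOf l).getD i ∅ = blockOfComp l i := by
  rw [List.getD_eq_getElem _ _ (by simpa [blocksOf] using h)]
  simp [blocksOf]

/-- Two elements lie in two distinct blocks of the composition `l`. -/
def GoodPair (l : List ℕ) (x y : ℕ) : Prop :=
  ∃ i j, i < l.length ∧ j < l.length ∧ i ≠ j ∧ x ∈ blockOfComp l i ∧ y ∈ blockOfComp l j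

lemma goodPair_symm {l : List ℕ} {x y : ℕ} (h : GoodPair l x y) : GoodPair l y x := by
  obtain ⟨i, j, hi, hj, hij, hx, hy⟩ := h
  exact ⟨j, i, hj, hi, hij.symm, hy, hx⟩

lemma goodPair_bounds {l : List ℕ} {x y : ℕ} (h : GoodPair l x y) :
    (0 < x ∧ x ≤ l.sum) ∧ (0 < y ∧ y ≤ l.sum) := by
  obtain ⟨i, j, hi, hj, _, hx, hy⟩ := h
  exact ⟨blockOfComp_bounds hi hx, blockOfComp_bounds hj hy⟩

lemma base_iff_goodPair {M : Matroid ℕ} {l : List ℕ} (h : IsBlockRealization M (blocksOf l))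
    (B : Set ℕ) :
    M.IsBase B ↔ ∃ x y : ℕ, x ≠ y ∧ B = {x, y} ∧ GoodPair l x y := by
  rw [h.2.2.2 B]
  constructor
  · rintro ⟨x, y, hxy, hB, i, j, hi, hj, hij, hx, hy⟩
    rw [blocksOf_length] at hi hj
    rw [blocksOf_getD hi] at hx
    rw [blocksOf_getD hj] at hy
    exact ⟨x, y, hxy, hB, i, j, hi, hj, hij, hx, hy⟩
  · rintro ⟨x, y, hxy, hB, i, j, hi, hj, hij, hx, hy⟩
    refine ⟨x, y, hxy, hB, i, j, ?_, ?_, hij, ?_, ?_⟩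
    · rwa [blocksOf_length]
    · rwa [blocksOf_length]
    · rwa [blocksOf_getD hi]
    · rwa [blocksOf_getD hj]

section GoodPairSplit

variable {lam : List ℕ} {s : ℕ}

/-- Splitting a composition: take-sums of the merged-head composition. -/
lemma alpha_takeSum (lam : List ℕ) (s k : ℕ) :
    ((((lam.take s).sum : ℕ) :: lam.drop s).take (k + 1)).sum = (lam.take (s + k)).sum := by
  rw [List.take_succ_cons, List.sum_cons, List.take_add, List.sum_append]

lemma alpha_block_zero :
    blockOfComp (((lam.take s).sum : ℕ) :: lam.drop s) 0 = Finset.Ioc 0 (lam.take s).sum := by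
  simp [blockOfComp]

lemma alpha_block_succ (k : ℕ) :
    blockOfComp (((lam.take s).sum : ℕ) :: lam.drop s) (k + 1) = blockOfComp lam (s + k) := by
  unfold blockOfComp
  rw [alpha_takeSum lam s k, alpha_takeSum lam s (k + 1)]
  have h : s + (k + 1) = s + k + 1 := by omega
  rw [h]

lemma beta_takeSum (hs : s ≤ lam.length) {k : ℕ} (hk : k ≤ s) :
    ((lam.take s ++ [(lam.drop s).sum]).take k).sum = (lam.take k).sum := by
  rw [List.take_append_of_le_length (by rw [List.length_take]; omega), List.take_take,
    min_eq_left hk]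

lemma beta_block_lt (hs : s ≤ lam.length) {k : ℕ} (hk : k < s) :
    blockOfComp (lam.take s ++ [(lam.drop s).sum]) k = blockOfComp lam k := by
  unfold blockOfComp
  rw [beta_takeSum hs (by omega), beta_takeSum hs (by omega)]

lemma beta_block_last (hs : s ≤ lam.length) :
    blockOfComp (lam.take s ++ [(lam.drop s).sum]) s
      = Finset.Ioc (lam.take s).sum lam.sum := by
  unfold blockOfComp
  rw [beta_takeSum hs (le_refl s)]
  congr 1
  have hlen : (lam.take s ++ [(lam.drop s).sum]).length = s + 1 := by
    rw [List.length_append, List.length_take]; simp; omega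
  rw [← hlen, List.take_length, List.sum_append, List.sum_cons, List.sum_nil]
  have := List.take_append_drop s lam
  calc (lam.take s).sum + ((lam.drop s).sum + 0)
      = (lam.take s ++ lam.drop s).sum := by rw [List.sum_append]; omega
    _ = lam.sum := by rw [this]

lemma sum_take_add_drop (lam : List ℕ) (s : ℕ) :
    (lam.take s).sum + (lam.drop s).sum = lam.sum := by
  conv_rhs => rw [← List.take_append_drop s lam]
  rw [List.sum_append]

/-- A mixed pair (one element in each half) is a good pair for `lam`. -/
lemma goodPair_of_sides (hst : s < lam.length) {x y : ℕ}
    (hx : 0 < x ∧ x ≤ (lam.take s).sum) (hy : (lam.take s).sum < y ∧ y ≤ lam.sum) :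
    GoodPair lam x y := by
  have hxs : x ≤ lam.sum := by
    have := takeSum_le lam (show s ≤ lam.length by omega)
    rw [List.take_length] at this; omega
  obtain ⟨i, hi, hxi⟩ := exists_blockOfComp lam x hx.1 hxs
  obtain ⟨j, hj, hyj⟩ := exists_blockOfComp lam y (by omega) hy.2
  have hilt : i < s := (blockOfComp_le_iff hxi).1 hx.2
  have hjge : ¬ j < s := fun h => by
    have := (blockOfComp_le_iff hyj).2 h; omega
  exact ⟨i, j, hi, hj, by omega, hxi, hyj⟩

lemma goodPair_mu_iff (hs : 1 ≤ s) (hst : s < lam.length) {x y : ℕ} :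
    GoodPair [(lam.take s).sum, (lam.drop s).sum] x y ↔
      GoodPair lam x y ∧
        ¬ ((x ≤ (lam.take s).sum ∧ y ≤ (lam.take s).sum) ∨
           ((lam.take s).sum < x ∧ (lam.take s).sum < y)) := by
  set a := (lam.take s).sum with ha
  have hblock0 : blockOfComp [a, (lam.drop s).sum] 0 = Finset.Ioc 0 a := by
    simp [blockOfComp]
  have hblock1 : blockOfComp [a, (lam.drop s).sum] 1 = Finset.Ioc a lam.sum := by
    simp [blockOfComp]
    rw [← sum_take_add_drop lam s, ha]
  constructor
  · rintro ⟨i, j, hi, hj, hij, hx, hy⟩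
    simp only [List.length_cons, List.length_nil] at hi hj
    interval_cases i <;> interval_cases j <;> first
    | omega
    | (rw [hblock0] at hx; rw [hblock1] at hy
       rw [Finset.mem_Ioc] at hx hy
       exact ⟨goodPair_of_sides hst hx hy, by omega⟩)
    | (rw [hblock1] at hx; rw [hblock0] at hy
       rw [Finset.mem_Ioc] at hx hy
       exact ⟨goodPair_symm (goodPair_of_sides hst hy hx), by omega⟩)
  · rintro ⟨hgp, hnot⟩
    obtain ⟨⟨hx0, hxs⟩, ⟨hy0, hys⟩⟩ := goodPair_bounds hgp
    by_cases hxa : x ≤ a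
    · have hya : a < y := by omega
      refine ⟨0, 1, by simp, by simp, by omega, ?_, ?_⟩
      · rw [hblock0, Finset.mem_Ioc]; omega
      · rw [hblock1, Finset.mem_Ioc]; omega
    · have hya : y ≤ a := by omega
      refine ⟨1, 0, by simp, by simp, by omega, ?_, ?_⟩
      · rw [hblock1, Finset.mem_Ioc]; omega
      · rw [hblock0, Finset.mem_Ioc]; omega

lemma goodPair_alpha_iff (hs : 1 ≤ s) (hst : s < lam.length) {x y : ℕ} :
    GoodPair (((lam.take s).sum : ℕ) :: lam.drop s) x y ↔
      GoodPair lam x y ∧ ¬ (x ≤ (lam.take s).sum ∧ y ≤ (lam.take s).sum) := by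
  set a := (lam.take s).sum with ha
  have hlen : (a :: lam.drop s).length = (lam.length - s) + 1 := by
    simp [List.length_drop]
  constructor
  · rintro ⟨i, j, hi, hj, hij, hx, hy⟩
    rw [hlen] at hi hj
    match i, j with
    | 0, 0 => omega
    | 0, k + 1 =>
      rw [alpha_block_zero, Finset.mem_Ioc] at hx
      rw [alpha_block_succ] at hy
      have hsk : s + k < lam.length := by omega
      have hya : ¬ y ≤ a := fun h => by
        have := (blockOfComp_le_iff hy).1 h; omega
      have hybd := blockOfComp_bounds hsk hy
      exact ⟨goodPair_of_sides hst hx (by omega), by omega⟩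
    | k + 1, 0 =>
      rw [alpha_block_zero, Finset.mem_Ioc] at hy
      rw [alpha_block_succ] at hx
      have hsk : s + k < lam.length := by omega
      have hxa : ¬ x ≤ a := fun h => by
        have := (blockOfComp_le_iff hx).1 h; omega
      have hxbd := blockOfComp_bounds hsk hx
      exact ⟨goodPair_symm (goodPair_of_sides hst hy (by omega)), by omega⟩
    | k + 1, k' + 1 =>
      rw [alpha_block_succ] at hx hy
      have hsk : s + k < lam.length := by omega
      have hsk' : s + k' < lam.length := by omega
      have hxa : ¬ x ≤ a := fun h => by
        have := (blockOfComp_le_iff hx).1 h; omega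
      exact ⟨⟨s + k, s + k', hsk, hsk', by omega, hx, hy⟩, by omega⟩
  · rintro ⟨⟨i, j, hi, hj, hij, hx, hy⟩, hnot⟩
    by_cases hxa : x ≤ a
    · -- then `a < y`, `y` is in a block `j ≥ s`
      have hya : ¬ y ≤ a := fun h => hnot ⟨hxa, h⟩
      have hjs : ¬ j < s := fun h => hya ((blockOfComp_le_iff hy).2 h)
      have hx0 : 0 < x := (blockOfComp_bounds hi hx).1
      refine ⟨0, j - s + 1, by omega, by rw [hlen]; omega, by omega, ?_, ?_⟩
      · rw [alpha_block_zero, Finset.mem_Ioc]; omega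
      · rw [alpha_block_succ]
        have : s + (j - s) = j := by omega
        rwa [this]
    · have hxs : ¬ i < s := fun h => hxa ((blockOfComp_le_iff hx).2 h)
      by_cases hya : y ≤ a
      · have hy0 : 0 < y := (blockOfComp_bounds hj hy).1
        refine ⟨i - s + 1, 0, by rw [hlen]; omega, by omega, by omega, ?_, ?_⟩
        · rw [alpha_block_succ]
          have : s + (i - s) = i := by omega
          rwa [this]
        · rw [alpha_block_zero, Finset.mem_Ioc]; omega
      · have hjs : ¬ j < s := fun h => hya ((blockOfComp_le_iff hy).2 h)
        refine ⟨i - s + 1, j - s + 1, by rw [hlen]; omega, by rw [hlen]; omega, by omega,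
          ?_, ?_⟩
        · rw [alpha_block_succ]
          have : s + (i - s) = i := by omega
          rwa [this]
        · rw [alpha_block_succ]
          have : s + (j - s) = j := by omega
          rwa [this]

lemma goodPair_beta_iff (hs : 1 ≤ s) (hst : s < lam.length) {x y : ℕ} :
    GoodPair (lam.take s ++ [(lam.drop s).sum]) x y ↔
      GoodPair lam x y ∧ ¬ ((lam.take s).sum < x ∧ (lam.take s).sum < y) := by
  set a := (lam.take s).sum with ha
  have hsle : s ≤ lam.length := by omega
  have hlen : (lam.take s ++ [(lam.drop s).sum]).length = s + 1 := by
    rw [List.length_append, List.length_take]; simp; omega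
  constructor
  · rintro ⟨i, j, hi, hj, hij, hx, hy⟩
    rw [hlen] at hi hj
    rcases Nat.lt_or_ge i s with hi' | hi' <;> rcases Nat.lt_or_ge j s with hj' | hj'
    · rw [beta_block_lt hsle hi'] at hx
      rw [beta_block_lt hsle hj'] at hy
      have hxa : x ≤ a := (blockOfComp_le_iff hx).2 hi'
      exact ⟨⟨i, j, by omega, by omega, hij, hx, hy⟩, by omega⟩
    · have hjeq : j = s := by omega
      rw [beta_block_lt hsle hi'] at hx
      rw [hjeq, beta_block_last hsle, Finset.mem_Ioc] at hy
      have hxa : x ≤ a := (blockOfComp_le_iff hx).2 hi'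
      have hx0 : 0 < x := (blockOfComp_bounds (by omega) hx).1
      exact ⟨goodPair_of_sides hst ⟨hx0, hxa⟩ hy, by omega⟩
    · have hieq : i = s := by omega
      rw [beta_block_lt hsle hj'] at hy
      rw [hieq, beta_block_last hsle, Finset.mem_Ioc] at hx
      have hya : y ≤ a := (blockOfComp_le_iff hy).2 hj'
      have hy0 : 0 < y := (blockOfComp_bounds (by omega) hy).1
      exact ⟨goodPair_symm (goodPair_of_sides hst ⟨hy0, hya⟩ hx), by omega⟩
    · omega
  · rintro ⟨⟨i, j, hi, hj, hij, hx, hy⟩, hnot⟩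
    by_cases hxa : x ≤ a
    · have his : i < s := (blockOfComp_le_iff hx).1 hxa
      by_cases hya : y ≤ a
      · have hjs : j < s := by
          by_contra h
          have := (blockOfComp_le_iff hy).1 hya; omega
        refine ⟨i, j, by omega, by omega, hij, ?_, ?_⟩
        · rwa [beta_block_lt hsle his]
        · rwa [beta_block_lt hsle hjs]
      · have hybd := blockOfComp_bounds hj hy
        refine ⟨i, s, by omega, by omega, by omega, ?_, ?_⟩
        · rwa [beta_block_lt hsle his]
        · rw [beta_block_last hsle, Finset.mem_Ioc]; omega
    · have hya : y ≤ a := by omega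
      have hjs : j < s := by
        by_contra h
        have := (blockOfComp_le_iff hy).1 hya; omega
      have hxbd := blockOfComp_bounds hi hx
      refine ⟨s, j, by omega, by omega, by omega, ?_, ?_⟩
      · rw [beta_block_last hsle, Finset.mem_Ioc]; omega
      · rwa [beta_block_lt hsle hjs]

end GoodPairSplit

/-! ### Vertices of matroid base polytopes -/

/-- The set of vertices (indicator vectors of bases) of `Q(M)`. -/
def Vset (M : Matroid ℕ) : Set (ℕ → ℝ) :=
  {x | ∃ B : Set ℕ, M.IsBase B ∧ x = B.indicator fun _ => (1 : ℝ)}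

lemma Qpoly_eq_hull (M : Matroid ℕ) : Qpoly M = convexHull ℝ (Vset M) := rfl

lemma indicator_pair {x y : ℕ} (h : x ≠ y) :
    (({x, y} : Set ℕ).indicator fun _ => (1 : ℝ)) =
      fun i => (if i = x then (1 : ℝ) else 0) + (if i = y then 1 else 0) := by
  funext i
  by_cases hx : i = x
  · subst hx
    rw [Set.indicator_of_mem (by simp) _, if_pos rfl, if_neg h]
    norm_num
  · by_cases hy : i = y
    · subst hy
      rw [Set.indicator_of_mem (by simp) _, if_neg hx, if_pos rfl]
      norm_num
    · rw [Set.indicator_of_notMem (by simp [hx, hy]) _, if_neg hx, if_neg hy]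
      norm_num

lemma coordSum_indicator_pair (s : Finset ℕ) {x y : ℕ} (h : x ≠ y) :
    coordSum s (({x, y} : Set ℕ).indicator fun _ => (1 : ℝ)) =
      (if x ∈ s then (1 : ℝ) else 0) + (if y ∈ s then 1 else 0) := by
  rw [indicator_pair h, coordSum_apply, Finset.sum_add_distrib,
    Finset.sum_ite_eq' s x (fun _ => (1 : ℝ)), Finset.sum_ite_eq' s y (fun _ => (1 : ℝ))]

lemma mem_Vset_iff {M : Matroid ℕ} {l : List ℕ} (h : IsBlockRealization M (blocksOf l))
    {v : ℕ → ℝ} : v ∈ Vset M ↔ ∃ x y : ℕ, x ≠ y ∧ GoodPair l x y ∧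
      v = (({x, y} : Set ℕ).indicator fun _ => (1 : ℝ)) := by
  constructor
  · rintro ⟨B, hB, rfl⟩
    obtain ⟨x, y, hxy, rfl, hgp⟩ := (base_iff_goodPair h B).1 hB
    exact ⟨x, y, hxy, hgp, rfl⟩
  · rintro ⟨x, y, hxy, hgp, rfl⟩
    exact ⟨{x, y}, (base_iff_goodPair h _).2 ⟨x, y, hxy, rfl, hgp⟩, rfl⟩

end Statement11Aux

/-- the geometric hyperplane split of rank-two matroid base polytopes:
`Q(M_λ) = Q(M_α) ∪ Q(M_β)`, and `Q(M_α) ∩ Q(M_β) = Q(M_μ)` is a face of both,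
i.e. this is a matroid base polytope decomposition (a split). -/
theorem rank2_polytope_split (lam : List ℕ) (hpos : ∀ a ∈ lam, 0 < a) (ht : 2 ≤ lam.length)
    (s : ℕ) (hs : 1 ≤ s) (hst : s < lam.length)
    (Mlam Malpha Mbeta Mmu : Matroid ℕ)
    (hlam : IsBlockRealization Mlam (blocksOf lam))
    (halpha : IsBlockRealization Malpha (blocksOf ((lam.take s).sum :: lam.drop s)))
    (hbeta : IsBlockRealization Mbeta (blocksOf (lam.take s ++ [(lam.drop s).sum])))
    (hmu : IsBlockRealization Mmu (blocksOf [(lam.take s).sum, (lam.drop s).sum])) :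
    Qpoly Mlam = Qpoly Malpha ∪ Qpoly Mbeta ∧
    Qpoly Malpha ∩ Qpoly Mbeta = Qpoly Mmu ∧
    IsExtreme ℝ (Qpoly Malpha) (Qpoly Mmu) ∧
    IsExtreme ℝ (Qpoly Mbeta) (Qpoly Mmu) := by
  classical
  set a := (lam.take s).sum with hadef
  set n := lam.sum with hndef
  set f := coordSum (Finset.Ioc 0 a) with hfdef
  set g := coordSum (Finset.Ioc a n) with hgdef
  -- values of `f` and `g` on an indicator vector of a pair
  have hfval : ∀ x y : ℕ, x ≠ y → 0 < x → 0 < y →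
      f (({x, y} : Set ℕ).indicator fun _ => (1 : ℝ)) =
        (if x ≤ a then (1 : ℝ) else 0) + (if y ≤ a then 1 else 0) := by
    intro x y hxy hx hy
    rw [hfdef, coordSum_indicator_pair _ hxy]
    congr 1
    · exact if_congr (by simp [Finset.mem_Ioc, hx]) rfl rfl
    · exact if_congr (by simp [Finset.mem_Ioc, hy]) rfl rfl
  have hgval : ∀ x y : ℕ, x ≠ y → x ≤ n → y ≤ n →
      g (({x, y} : Set ℕ).indicator fun _ => (1 : ℝ)) =
        (if a < x then (1 : ℝ) else 0) + (if a < y then 1 else 0) := by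
    intro x y hxy hx hy
    rw [hgdef, coordSum_indicator_pair _ hxy]
    congr 1
    · exact if_congr (by simp [Finset.mem_Ioc, hx]) rfl rfl
    · exact if_congr (by simp [Finset.mem_Ioc, hy]) rfl rfl
  -- extraction of vertices
  have hVl := fun {v} => (mem_Vset_iff (l := lam) hlam (v := v))
  have hVa' := fun {v} => (mem_Vset_iff (l := a :: lam.drop s) halpha (v := v))
  have hVb' := fun {v} => (mem_Vset_iff (l := lam.take s ++ [(lam.drop s).sum]) hbeta (v := v))
  have hVm' := fun {v} => (mem_Vset_iff (l := [a, (lam.drop s).sum]) hmu (v := v))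
  -- values of `f`, `g` on vertices of `Q(M_lam)`
  have hval_f : ∀ v ∈ Vset Mlam, f v = 0 ∨ f v = 1 ∨ f v = 2 := by
    rintro v hv
    obtain ⟨x, y, hxy, hgp, rfl⟩ := hVl.1 hv
    obtain ⟨⟨hx0, hxn⟩, ⟨hy0, hyn⟩⟩ := goodPair_bounds hgp
    rw [hfval x y hxy hx0 hy0]
    by_cases h1 : x ≤ a <;> by_cases h2 : y ≤ a <;> simp [h1, h2] <;> norm_num
  have hval_g : ∀ v ∈ Vset Mlam, g v = 0 ∨ g v = 1 ∨ g v = 2 := by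
    rintro v hv
    obtain ⟨x, y, hxy, hgp, rfl⟩ := hVl.1 hv
    obtain ⟨⟨hx0, hxn⟩, ⟨hy0, hyn⟩⟩ := goodPair_bounds hgp
    rw [hgval x y hxy hxn hyn]
    by_cases h1 : a < x <;> by_cases h2 : a < y <;> simp [h1, h2] <;> norm_num
  have hfg2 : ∀ v ∈ Vset Mlam, (f + g) v = 2 := by
    rintro v hv
    obtain ⟨x, y, hxy, hgp, rfl⟩ := hVl.1 hv
    obtain ⟨⟨hx0, hxn⟩, ⟨hy0, hyn⟩⟩ := goodPair_bounds hgp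
    rw [LinearMap.add_apply, hfval x y hxy hx0 hy0, hgval x y hxy hxn hyn]
    by_cases h1 : x ≤ a <;> by_cases h2 : y ≤ a <;>
      rw [if_congr (show a < x ↔ ¬ x ≤ a by omega) rfl rfl,
        if_congr (show a < y ↔ ¬ y ≤ a by omega) rfl rfl] <;>
      simp [h1, h2] <;> norm_num
  -- identification of the vertex sets
  have hVa : Vset Malpha = {v | v ∈ Vset Mlam ∧ f v ≤ 1} := by
    ext v
    constructor
    · intro hv
      obtain ⟨x, y, hxy, hgp, rfl⟩ := hVa'.1 hv
      rw [goodPair_alpha_iff hs hst] at hgp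
      obtain ⟨hgl, hnot⟩ := hgp
      obtain ⟨⟨hx0, hxn⟩, ⟨hy0, hyn⟩⟩ := goodPair_bounds hgl
      rw [← hadef] at hnot
      refine ⟨hVl.2 ⟨x, y, hxy, hgl, rfl⟩, ?_⟩
      rw [hfval x y hxy hx0 hy0]
      by_cases h1 : x ≤ a
      · rw [if_pos h1, if_neg (fun h2 => hnot ⟨h1, h2⟩)]; norm_num
      · rw [if_neg h1]
        by_cases h2 : y ≤ a
        · rw [if_pos h2]; norm_num
        · rw [if_neg h2]; norm_num
    · rintro ⟨hv, hfv⟩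
      obtain ⟨x, y, hxy, hgp, rfl⟩ := hVl.1 hv
      obtain ⟨⟨hx0, hxn⟩, ⟨hy0, hyn⟩⟩ := goodPair_bounds hgp
      refine hVa'.2 ⟨x, y, hxy, (goodPair_alpha_iff hs hst).2 ⟨hgp, ?_⟩, rfl⟩
      rintro ⟨h1, h2⟩
      rw [hfval x y hxy hx0 hy0, if_pos h1, if_pos h2] at hfv
      norm_num at hfv
  have hVb : Vset Mbeta = {v | v ∈ Vset Mlam ∧ g v ≤ 1} := by
    ext v
    constructor
    · intro hv
      obtain ⟨x, y, hxy, hgp, rfl⟩ := hVb'.1 hv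
      rw [goodPair_beta_iff hs hst] at hgp
      obtain ⟨hgl, hnot⟩ := hgp
      obtain ⟨⟨hx0, hxn⟩, ⟨hy0, hyn⟩⟩ := goodPair_bounds hgl
      rw [← hadef] at hnot
      refine ⟨hVl.2 ⟨x, y, hxy, hgl, rfl⟩, ?_⟩
      rw [hgval x y hxy hxn hyn]
      by_cases h1 : a < x
      · rw [if_pos h1, if_neg (fun h2 => hnot ⟨h1, h2⟩)]; norm_num
      · rw [if_neg h1]
        by_cases h2 : a < y
        · rw [if_pos h2]; norm_num
        · rw [if_neg h2]; norm_num
    · rintro ⟨hv, hgv⟩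
      obtain ⟨x, y, hxy, hgp, rfl⟩ := hVl.1 hv
      obtain ⟨⟨hx0, hxn⟩, ⟨hy0, hyn⟩⟩ := goodPair_bounds hgp
      refine hVb'.2 ⟨x, y, hxy, (goodPair_beta_iff hs hst).2 ⟨hgp, ?_⟩, rfl⟩
      rintro ⟨h1, h2⟩
      rw [hgval x y hxy hxn hyn, if_pos h1, if_pos h2] at hgv
      norm_num at hgv
  have hVm : Vset Mmu = {v | v ∈ Vset Mlam ∧ f v = 1} := by
    ext v
    constructor
    · intro hv
      obtain ⟨x, y, hxy, hgp, rfl⟩ := hVm'.1 hv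
      rw [goodPair_mu_iff hs hst] at hgp
      obtain ⟨hgl, hnot⟩ := hgp
      obtain ⟨⟨hx0, hxn⟩, ⟨hy0, hyn⟩⟩ := goodPair_bounds hgl
      rw [← hadef] at hnot
      refine ⟨hVl.2 ⟨x, y, hxy, hgl, rfl⟩, ?_⟩
      rw [hfval x y hxy hx0 hy0]
      by_cases h1 : x ≤ a <;> by_cases h2 : y ≤ a <;> simp [h1, h2] <;>
        exact absurd (by omega) hnot
    · rintro ⟨hv, hfv⟩
      obtain ⟨x, y, hxy, hgp, rfl⟩ := hVl.1 hv
      obtain ⟨⟨hx0, hxn⟩, ⟨hy0, hyn⟩⟩ := goodPair_bounds hgp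
      refine hVm'.2 ⟨x, y, hxy, (goodPair_mu_iff hs hst).2 ⟨hgp, ?_⟩, rfl⟩
      rw [← hadef]
      rw [hfval x y hxy hx0 hy0] at hfv
      by_cases h1 : x ≤ a <;> by_cases h2 : y ≤ a <;> simp [h1, h2] at hfv <;> omega
  -- the exchange property for `f`
  have hexf : ∀ v ∈ Vset Mlam, ∀ u ∈ Vset Mlam, f v = 2 → f u = 0 →
      ∃ p, (p ∈ Vset Mlam ∧ f p = 1) ∧ ∃ q, (q ∈ Vset Mlam ∧ f q = 1) ∧ v + u = p + q := by
    intro v hv u hu hfv hfu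
    obtain ⟨x1, x2, hx12, hgpx, rfl⟩ := hVl.1 hv
    obtain ⟨y1, y2, hy12, hgpy, rfl⟩ := hVl.1 hu
    obtain ⟨⟨hx10, hx1n⟩, ⟨hx20, hx2n⟩⟩ := goodPair_bounds hgpx
    obtain ⟨⟨hy10, hy1n⟩, ⟨hy20, hy2n⟩⟩ := goodPair_bounds hgpy
    rw [hfval x1 x2 hx12 hx10 hx20] at hfv
    rw [hfval y1 y2 hy12 hy10 hy20] at hfu
    have hxa : x1 ≤ a ∧ x2 ≤ a := by
      by_cases h1 : x1 ≤ a <;> by_cases h2 : x2 ≤ a <;> simp [h1, h2] at hfv <;>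
        first
        | exact ⟨h1, h2⟩
        | norm_num at hfv
    have hya : a < y1 ∧ a < y2 := by
      by_cases h1 : y1 ≤ a <;> by_cases h2 : y2 ≤ a <;> simp [h1, h2] at hfu <;>
        first
        | exact ⟨by omega, by omega⟩
        | norm_num at hfu
    have hne1 : x1 ≠ y1 := by omega
    have hne2 : x2 ≠ y2 := by omega
    refine ⟨({x1, y1} : Set ℕ).indicator fun _ => (1 : ℝ), ⟨?_, ?_⟩,
      ({x2, y2} : Set ℕ).indicator fun _ => (1 : ℝ), ⟨?_, ?_⟩, ?_⟩
    · exact hVl.2 ⟨x1, y1, hne1,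
        goodPair_of_sides hst ⟨hx10, hxa.1⟩ ⟨hya.1, hy1n⟩, rfl⟩
    · rw [hfval x1 y1 hne1 hx10 hy10, if_pos hxa.1, if_neg (by omega)]; norm_num
    · exact hVl.2 ⟨x2, y2, hne2,
        goodPair_of_sides hst ⟨hx20, hxa.2⟩ ⟨hya.2, hy2n⟩, rfl⟩
    · rw [hfval x2 y2 hne2 hx20 hy20, if_pos hxa.2, if_neg (by omega)]; norm_num
    · rw [indicator_pair hx12, indicator_pair hy12, indicator_pair hne1, indicator_pair hne2]
      funext i
      simp only [Pi.add_apply]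
      ring
  -- the exchange property for `g`
  have hexg : ∀ v ∈ Vset Mlam, ∀ u ∈ Vset Mlam, g v = 2 → g u = 0 →
      ∃ p, (p ∈ Vset Mlam ∧ g p = 1) ∧ ∃ q, (q ∈ Vset Mlam ∧ g q = 1) ∧ v + u = p + q := by
    intro v hv u hu hgv hgu
    obtain ⟨x1, x2, hx12, hgpx, rfl⟩ := hVl.1 hv
    obtain ⟨y1, y2, hy12, hgpy, rfl⟩ := hVl.1 hu
    obtain ⟨⟨hx10, hx1n⟩, ⟨hx20, hx2n⟩⟩ := goodPair_bounds hgpx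
    obtain ⟨⟨hy10, hy1n⟩, ⟨hy20, hy2n⟩⟩ := goodPair_bounds hgpy
    rw [hgval x1 x2 hx12 hx1n hx2n] at hgv
    rw [hgval y1 y2 hy12 hy1n hy2n] at hgu
    have hxa : a < x1 ∧ a < x2 := by
      by_cases h1 : a < x1 <;> by_cases h2 : a < x2 <;> simp [h1, h2] at hgv <;>
        first
        | exact ⟨h1, h2⟩
        | norm_num at hgv
    have hya : y1 ≤ a ∧ y2 ≤ a := by
      by_cases h1 : a < y1 <;> by_cases h2 : a < y2 <;> simp [h1, h2] at hgu <;>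
        first
        | exact ⟨by omega, by omega⟩
        | norm_num at hgu
    have hne1 : x1 ≠ y1 := by omega
    have hne2 : x2 ≠ y2 := by omega
    refine ⟨({x1, y1} : Set ℕ).indicator fun _ => (1 : ℝ), ⟨?_, ?_⟩,
      ({x2, y2} : Set ℕ).indicator fun _ => (1 : ℝ), ⟨?_, ?_⟩, ?_⟩
    · exact hVl.2 ⟨x1, y1, hne1, goodPair_symm
        (goodPair_of_sides hst ⟨hy10, hya.1⟩ ⟨hxa.1, hx1n⟩), rfl⟩
    · rw [hgval x1 y1 hne1 hx1n hy1n, if_pos hxa.1, if_neg (by omega)]; norm_num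
    · exact hVl.2 ⟨x2, y2, hne2, goodPair_symm
        (goodPair_of_sides hst ⟨hy20, hya.2⟩ ⟨hxa.2, hx2n⟩), rfl⟩
    · rw [hgval x2 y2 hne2 hx2n hy2n, if_pos hxa.2, if_neg (by omega)]; norm_num
    · rw [indicator_pair hx12, indicator_pair hy12, indicator_pair hne1, indicator_pair hne2]
      funext i
      simp only [Pi.add_apply]
      ring
  -- basic containments
  have hVaSub : Vset Malpha ⊆ Vset Mlam := by
    rw [hVa]; exact fun v hv => hv.1
  have hVbSub : Vset Mbeta ⊆ Vset Mlam := by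
    rw [hVb]; exact fun v hv => hv.1
  have hVmVa : Vset Mmu ⊆ Vset Malpha := by
    rw [hVm, hVa]; exact fun v hv => ⟨hv.1, le_of_eq hv.2⟩
  have hVmVb : Vset Mmu ⊆ Vset Mbeta := by
    rw [hVm, hVb]
    rintro v ⟨hv, hfv⟩
    have := hfg2 v hv
    rw [LinearMap.add_apply] at this
    exact ⟨hv, by linarith⟩
  -- `f + g = 2` on `Q(M_lam)`
  have hfg2hull : ∀ x ∈ Qpoly Mlam, f x + g x = 2 := by
    intro x hx
    have := hull_subset_eq (f + g) hfg2 hx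
    rw [Set.mem_setOf_eq, LinearMap.add_apply] at this
    exact this
  have hQbQl : Qpoly Mbeta ⊆ Qpoly Mlam := convexHull_mono hVbSub
  have hQaQl : Qpoly Malpha ⊆ Qpoly Mlam := convexHull_mono hVaSub
  -- bounds of `f` and `g` on the two polytopes
  have hfa_le : ∀ x ∈ Qpoly Malpha, f x ≤ 1 := by
    intro x hx
    exact hull_subset_le f (S := Vset Malpha) (r := 1)
      (by rw [hVa]; exact fun v hv => hv.2) hx
  have hgb_le : ∀ x ∈ Qpoly Mbeta, g x ≤ 1 := by
    intro x hx
    exact hull_subset_le g (S := Vset Mbeta) (r := 1)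
      (by rw [hVb]; exact fun v hv => hv.2) hx
  have hfmu : ∀ x ∈ Qpoly Mmu, f x = 1 := by
    intro x hx
    exact hull_subset_eq f (S := Vset Mmu) (r := 1)
      (by rw [hVm]; exact fun v hv => hv.2) hx
  have hgmu : ∀ x ∈ Qpoly Mmu, g x = 1 := by
    intro x hx
    have h1 := hfmu x hx
    have h2 := hfg2hull x (convexHull_mono (hVmVa.trans hVaSub) hx)
    linarith
  -- the face containments
  have hface_a : ∀ x ∈ Qpoly Malpha, f x = 1 → x ∈ Qpoly Mmu := by
    intro x hx hfx
    have hres := face_hull f (Vset Malpha) (fun v hv => hfa_le v (subset_convexHull ℝ _ hv))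
      hx hfx
    have hset : {v | v ∈ Vset Malpha ∧ f v = 1} = Vset Mmu := by
      rw [hVa, hVm]
      ext v
      exact ⟨fun ⟨⟨h1, _⟩, h3⟩ => ⟨h1, h3⟩, fun ⟨h1, h2⟩ => ⟨⟨h1, le_of_eq h2⟩, h2⟩⟩
    rwa [hset] at hres
  have hface_b : ∀ x ∈ Qpoly Mbeta, g x = 1 → x ∈ Qpoly Mmu := by
    intro x hx hgx
    have hres := face_hull g (Vset Mbeta) (fun v hv => hgb_le v (subset_convexHull ℝ _ hv))
      hx hgx
    have hset : {v | v ∈ Vset Mbeta ∧ g v = 1} = Vset Mmu := by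
      rw [hVb, hVm]
      ext v
      constructor
      · rintro ⟨⟨h1, _⟩, h3⟩
        have := hfg2 v h1
        rw [LinearMap.add_apply] at this
        exact ⟨h1, by linarith⟩
      · rintro ⟨h1, h2⟩
        have := hfg2 v h1
        rw [LinearMap.add_apply] at this
        exact ⟨⟨h1, by linarith⟩, by linarith⟩
    rwa [hset] at hres
  -- Part 1: the union
  have hpart1 : Qpoly Mlam = Qpoly Malpha ∪ Qpoly Mbeta := by
    apply Set.Subset.antisymm
    · intro x hx
      rcases le_total (f x) 1 with hfx | hfx
      · left
        rw [Qpoly_eq_hull, hVa]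
        exact split_hull f (Vset Mlam) hval_f hexf hx hfx
      · right
        have hgx : g x ≤ 1 := by
          have := hfg2hull x hx
          linarith
        rw [Qpoly_eq_hull, hVb]
        exact split_hull g (Vset Mlam) hval_g hexg hx hgx
    · exact Set.union_subset hQaQl hQbQl
  -- Part 2: the intersection
  have hpart2 : Qpoly Malpha ∩ Qpoly Mbeta = Qpoly Mmu := by
    apply Set.Subset.antisymm
    · rintro x ⟨hxa, hxb⟩
      have h1 : f x ≤ 1 := hfa_le x hxa
      have h2 : g x ≤ 1 := hgb_le x hxb
      have h3 : f x + g x = 2 := hfg2hull x (hQaQl hxa)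
      exact hface_a x hxa (by linarith)
    · exact Set.subset_inter (convexHull_mono hVmVa) (convexHull_mono hVmVb)
  refine ⟨hpart1, hpart2, ?_, ?_⟩
  · -- extreme in Q(M_alpha)
    constructor
    · exact convexHull_mono hVmVa
    · rintro x1 hx1 x2 hx2 x hx hseg
      obtain ⟨c, d, hc, hd, hcd, hsum⟩ := hseg
      have hfx : f x = 1 := hfmu x hx
      have hfx1 : f x1 ≤ 1 := hfa_le x1 hx1
      have hfx2 : f x2 ≤ 1 := hfa_le x2 hx2
      have hlin : c * f x1 + d * f x2 = 1 := by
        rw [← hfx, ← hsum, map_add, map_smul, map_smul, smul_eq_mul, smul_eq_mul]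
      have hb1 : c * f x1 ≤ c := mul_le_of_le_one_right hc.le hfx1
      have hb2 : d * f x2 ≤ d := mul_le_of_le_one_right hd.le hfx2
      have he1 : f x1 = 1 :=
        mul_left_cancel₀ (ne_of_gt hc) ((by linarith : c * f x1 = c).trans (mul_one c).symm)
      have he2 : f x2 = 1 :=
        mul_left_cancel₀ (ne_of_gt hd) ((by linarith : d * f x2 = d).trans (mul_one d).symm)
      exact hface_a x1 hx1 he1
  · -- extreme in Q(M_beta)
    constructor
    · exact convexHull_mono hVmVb
    · rintro x1 hx1 x2 hx2 x hx hseg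
      obtain ⟨c, d, hc, hd, hcd, hsum⟩ := hseg
      have hgx : g x = 1 := hgmu x hx
      have hgx1 : g x1 ≤ 1 := hgb_le x1 hx1
      have hgx2 : g x2 ≤ 1 := hgb_le x2 hx2
      have hlin : c * g x1 + d * g x2 = 1 := by
        rw [← hgx, ← hsum, map_add, map_smul, map_smul, smul_eq_mul, smul_eq_mul]
      have hb1 : c * g x1 ≤ c := mul_le_of_le_one_right hc.le hgx1
      have hb2 : d * g x2 ≤ d := mul_le_of_le_one_right hd.le hgx2
      have he1 : g x1 = 1 :=
        mul_left_cancel₀ (ne_of_gt hc) ((by linarith : c * g x1 = c).trans (mul_one c).symm)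
      have he2 : g x2 = 1 :=
        mul_left_cancel₀ (ne_of_gt hd) ((by linarith : d * g x2 = d).trans (mul_one d).symm)
      exact hface_b x1 hx1 he1

end
end
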